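/- arXiv:2006.10095 — 5 statements merged into one kernel-verified Lean document; each statement's English description precedes it below -/
import Mathlib

section
/- Let X₁, ..., X_n be i.i.d. real random variables with mean μ and variance σ². Partition them into k = 8·log(1/δ) groups of size m = n/(8·log(1/δ)), compute the group means μ̄₁, ..., μ̄_k, and let μ̄ be their median. Then with probability at least 1 − δ, (μ̄ − μ)² ≤ 32 σ² log(1/δ) / n. -/
open MeasureTheory ProbabilityTheory Finset

lemma mom_group_indep {Ω : Type*} {mΩ : MeasurableSpace Ω} {P : Measure Ω}
    [IsProbabilityMeasure P] {k m : ℕ} (X : Fin k × Fin m → Ω → ℝ)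
    (hmeas : ∀ p, Measurable (X p))
    (hindep : iIndepFun X P) :
    iIndepFun
      (fun (j : Fin k) (ω : Ω) (i : Fin m) => X (j, i) ω) P := by
  classical
  rw [iIndepFun_iff_iIndep]
  have hcomap : ∀ j : Fin k,
      MeasurableSpace.pi.comap (fun (ω : Ω) (i : Fin m) => X (j, i) ω)
        = ⨆ p ∈ (Prod.fst ⁻¹' {j} : Set (Fin k × Fin m)),
            MeasurableSpace.comap (X p) inferInstance := by
    intro j
    rw [MeasurableSpace.pi, MeasurableSpace.comap_iSup]
    apply le_antisymm
    · refine iSup_le fun i => ?_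
      rw [MeasurableSpace.comap_comp]
      exact le_iSup₂ (f := fun p (_ : p ∈ (Prod.fst ⁻¹' {j} : Set (Fin k × Fin m))) =>
        MeasurableSpace.comap (X p) inferInstance) (j, i) rfl
    · refine iSup₂_le fun p hp => ?_
      obtain ⟨p1, p2⟩ := p
      obtain rfl : p1 = j := hp
      refine le_iSup_of_le p2 (le_of_eq ?_)
      exact (MeasurableSpace.comap_comp (g := fun (ω : Ω) (i : Fin m) => X (p1, i) ω)
        (f := fun b : Fin m → ℝ => b p2) (m := Real.measurableSpace)).symm
  simp_rw [hcomap]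
  -- now prove iIndep of the grouped sigma-algebras
  refine iIndepSets.iIndep
    (fun j => iSup₂_le fun p _ => (hmeas p).comap_le)
    (fun j => piiUnionInter
      (fun p => {s | MeasurableSet[MeasurableSpace.comap (X p) inferInstance] s})
      (Prod.fst ⁻¹' {j}))
    (fun j => isPiSystem_piiUnionInter _
      (fun p => @MeasurableSpace.isPiSystem_measurableSet Ω
        (MeasurableSpace.comap (X p) inferInstance)) _)
    (fun j => (generateFrom_piiUnionInter_measurableSet _ _).symm) ?_
  rw [iIndepSets_iff]
  intro T f hf
  -- extract the representation of each f j
  have hf' : ∀ j : Fin k, ∃ (t : Finset (Fin k × Fin m)) (g : Fin k × Fin m → Set Ω),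
      ↑t ⊆ (Prod.fst ⁻¹' {j} : Set (Fin k × Fin m)) ∧
      (∀ p ∈ t, MeasurableSet[MeasurableSpace.comap (X p) inferInstance] (g p)) ∧
      (j ∈ T → f j = ⋂ p ∈ t, g p) := by
    intro j
    by_cases hj : j ∈ T
    · obtain ⟨t, hts, g, hg, feq⟩ := hf j hj
      exact ⟨t, g, hts, fun p hp => hg p hp, fun _ => feq⟩
    · exact ⟨∅, fun _ => Set.univ, by simp, by simp, fun h => absurd h hj⟩
  choose t g hts hg hfeq using hf'
  have hfst : ∀ j, ∀ p ∈ t j, p.1 = j := fun j p hp => hts j hp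
  set G : Fin k × Fin m → Set Ω := fun p => g p.1 p with hG
  have hGg : ∀ j, ∀ p ∈ t j, G p = g j p := by
    intro j p hp; rw [hG]; simp only; rw [hfst j p hp]
  have hGmeas : ∀ j, ∀ p ∈ t j,
      MeasurableSet[MeasurableSpace.comap (X p) inferInstance] (G p) := by
    intro j p hp; rw [hGg j p hp]; exact hg j p hp
  set U : Finset (Fin k × Fin m) := T.biUnion t with hU
  have hUmeas : ∀ p ∈ U, MeasurableSet[MeasurableSpace.comap (X p) inferInstance] (G p) := by
    intro p hp
    rw [hU, Finset.mem_biUnion] at hp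
    obtain ⟨j, hj, hpj⟩ := hp
    exact hGmeas j p hpj
  have step1 : (⋂ j ∈ T, f j) = ⋂ p ∈ U, G p := by
    rw [hU, Finset.set_biInter_biUnion]
    refine Set.iInter₂_congr fun j hj => ?_
    rw [hfeq j hj]
    exact Set.iInter₂_congr fun p hp => (hGg j p hp).symm
  have hdisj : Set.PairwiseDisjoint (↑T) t := by
    intro j hj j' hj' hne
    refine Finset.disjoint_left.2 fun p hp hp' => hne ?_
    rw [← hfst j p hp, ← hfst j' p hp']
  have step4 : ∀ j ∈ T, P (f j) = ∏ p ∈ t j, P (G p) := by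
    intro j hj
    rw [hfeq j hj, ← hindep.meas_biInter (hGmeas j) ]
    exact congrArg P (Set.iInter₂_congr fun p hp => (hGg j p hp).symm)
  calc P (⋂ j ∈ T, f j) = P (⋂ p ∈ U, G p) := by rw [step1]
    _ = ∏ p ∈ U, P (G p) := hindep.meas_biInter hUmeas
    _ = ∏ j ∈ T, ∏ p ∈ t j, P (G p) := Finset.prod_biUnion hdisj
    _ = ∏ j ∈ T, P (f j) := Finset.prod_congr rfl fun j hj => (step4 j hj).symm

set_option maxHeartbeats 1000000 in
/-- Median-of-means. Given `n = k*m` i.i.d. real random variables with mean `μ` and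
variance `σ²`, partitioned into `k = 8 log(1/δ)` groups of size `m`, the median `med` of the `k`
group means satisfies `(med − μ)² ≤ 32 σ² log(1/δ) / n` with probability at least `1 − δ`. -/
theorem median_of_means
    {Ω : Type*} [MeasureSpace Ω] [IsProbabilityMeasure (ℙ : Measure Ω)]
    (k m n : ℕ) (hk : 0 < k) (hm : 0 < m) (hn : n = k * m)
    (δ : ℝ) (hδ : δ ∈ Set.Ioo (0 : ℝ) 1) (hkδ : (k : ℝ) = 8 * Real.log (1 / δ))
    (X : Fin k × Fin m → Ω → ℝ) (μ σ : ℝ)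
    (hmeas : ∀ i, Measurable (X i))
    (hindep : iIndepFun X ℙ)
    (hident : ∀ i j, IdentDistrib (X i) (X j) ℙ ℙ)
    (hL2 : ∀ i, MemLp (X i) 2 ℙ)
    (hmean : ∀ i, ∫ ω, X i ω ∂ℙ = μ)
    (hvar : ∀ i, variance (X i) ℙ = σ ^ 2)
    -- the group means
    (Y : Fin k → Ω → ℝ) (hY : ∀ j ω, Y j ω = (m : ℝ)⁻¹ * ∑ i : Fin m, X (j, i) ω)
    -- `med` is a median of the group means
    (med : Ω → ℝ) (hmeas_med : Measurable med)
    (hmed : ∀ ω, (k : ℝ) / 2 ≤ (Finset.univ.filter fun j => Y j ω ≤ med ω).card ∧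
                 (k : ℝ) / 2 ≤ (Finset.univ.filter fun j => med ω ≤ Y j ω).card) :
    ENNReal.ofReal (1 - δ) ≤
      ℙ {ω | (med ω - μ) ^ 2 ≤ 32 * σ ^ 2 * Real.log (1 / δ) / n} := by
  classical
  obtain ⟨hδ0, hδ1⟩ := hδ
  have hlog : Real.log (1 / δ) = (k : ℝ) / 8 := by rw [hkδ]; ring
  have hkR : (0:ℝ) < k := by exact_mod_cast hk
  have hmR : (0:ℝ) < m := by exact_mod_cast hm
  set ε2 : ℝ := 4 * σ ^ 2 / m with hε2
  have hconst : 32 * σ ^ 2 * Real.log (1 / δ) / n = ε2 := by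
    rw [hlog, hn, hε2]; push_cast; field_simp; ring
  set Y' : Fin k → Ω → ℝ := fun j ω => (m : ℝ)⁻¹ * ∑ i : Fin m, X (j, i) ω with hY'
  have hY'meas : ∀ j, Measurable (Y' j) :=
    fun j => (Finset.measurable_sum _ fun i _ => hmeas (j, i)).const_mul _
  set A : Fin k → Set Ω := fun j => {ω | ε2 < (Y' j ω - μ) ^ 2} with hA
  have hAmeas : ∀ j, MeasurableSet (A j) := fun j =>
    measurableSet_lt measurable_const (((hY'meas j).sub measurable_const).pow_const 2)
  have hint : ∀ p, Integrable (X p) ℙ := fun p => (hL2 p).integrable one_le_two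
  -- mean of group means
  have hY'mean : ∀ j, ∫ ω, Y' j ω ∂ℙ = μ := by
    intro j
    rw [hY']
    rw [integral_const_mul, integral_finset_sum _ fun i _ => hint (j, i)]
    simp only [hmean]
    rw [Finset.sum_const, card_univ, Fintype.card_fin, nsmul_eq_mul]
    field_simp
  -- L2 of group means
  have hY'L2 : ∀ j, MemLp (Y' j) 2 ℙ := by
    intro j
    have h : MemLp (fun ω => ∑ i : Fin m, X (j, i) ω) 2 ℙ := by
      have h2 := memLp_finset_sum' (μ := (ℙ : Measure Ω)) (Finset.univ)
        (f := fun (i : Fin m) => X (j, i)) (fun i _ => hL2 (j, i))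
      convert h2 using 1
      funext ω
      simp [Finset.sum_apply]
    exact h.const_mul _
  -- variance of group means
  have hY'var : ∀ j, variance (Y' j) ℙ = σ ^ 2 / m := by
    intro j
    have hsum : variance (∑ i : Fin m, (fun (i : Fin m) => X (j, i)) i) ℙ = m * σ ^ 2 := by
      rw [IndepFun.variance_sum (fun i _ => hL2 (j, i))
        (fun i _ i' hi' hne => hindep.indepFun (fun h => hne (by simpa using congrArg Prod.snd h)))]
      simp [hvar, Finset.sum_const, card_univ]
    have heq : (fun ω => (m : ℝ)⁻¹ * (∑ i : Fin m, (fun (i : Fin m) => X (j, i)) i) ω)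
        = Y' j := by
      funext ω; simp [hY', Finset.sum_apply]
    rw [← heq, variance_const_mul, hsum]
    field_simp
  -- Chebyshev
  have hAbound : ∀ j, ℙ (A j) ≤ ENNReal.ofReal (1 / 4) := by
    intro j
    rcases eq_or_lt_of_le (sq_nonneg σ) with hσ | hσ
    · -- degenerate case: σ² = 0
      have hε2z : ε2 = 0 := by rw [hε2, ← hσ]; simp
      have hvz : variance (Y' j) ℙ = 0 := by rw [hY'var j, ← hσ]; simp
      have hz : ℙ (A j) = 0 := by
        have hsub : A j ⊆ ⋃ N : ℕ, {ω | (1 : ℝ) / (N + 1) ≤ |Y' j ω - μ|} := by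
          intro ω hω
          have hlt : ε2 < (Y' j ω - μ) ^ 2 := hω
          rw [hε2z] at hlt
          have hne : Y' j ω - μ ≠ 0 := by
            intro h; rw [h] at hlt; simp at hlt
          obtain ⟨N, hN⟩ := exists_nat_one_div_lt (abs_pos.2 hne)
          exact Set.mem_iUnion.2 ⟨N, hN.le⟩
        refine le_antisymm (le_trans (measure_mono hsub) ?_) zero_le
        rw [measure_iUnion_null fun N => ?_]
        have hc : (0:ℝ) < 1 / (N + 1) := by positivity
        have := meas_ge_le_variance_div_sq (μ := (ℙ : Measure Ω)) (hY'L2 j) hc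
        rw [hY'mean j, hvz] at this
        simpa using this
      rw [hz]; exact zero_le
    · -- nondegenerate case
      have hε2pos : 0 < ε2 := by rw [hε2]; positivity
      have hc : 0 < Real.sqrt ε2 := Real.sqrt_pos.2 hε2pos
      have hsub : A j ⊆ {ω | Real.sqrt ε2 ≤ |Y' j ω - μ|} := by
        intro ω hω
        have hlt : ε2 < (Y' j ω - μ) ^ 2 := hω
        have := Real.sqrt_le_sqrt hlt.le
        rwa [Real.sqrt_sq_eq_abs] at this
      refine le_trans (measure_mono hsub) ?_
      have := meas_ge_le_variance_div_sq (μ := (ℙ : Measure Ω)) (hY'L2 j) hc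
      rw [hY'mean j, hY'var j, Real.sq_sqrt hε2pos.le] at this
      refine le_trans this (le_of_eq ?_)
      congr 1
      rw [hε2]
      have hσne : σ ≠ 0 := by rintro rfl; simp at hσ
      field_simp
  -- indicator variables
  set Z : Fin k → Ω → ℝ := fun j => (A j).indicator (fun _ => 1) with hZ
  have hZmeas : ∀ j, Measurable (Z j) := fun j =>
    (measurable_const.indicator (hAmeas j))
  -- independence of the indicators
  have hZindep : iIndepFun Z ℙ := by
    have hζ : Measurable (fun v : Fin m → ℝ =>
        ({v : Fin m → ℝ | ε2 < ((m : ℝ)⁻¹ * ∑ i : Fin m, v i - μ) ^ 2}).indicator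
          (fun _ => (1:ℝ)) v) := by
      refine Measurable.indicator measurable_const ?_
      exact measurableSet_lt measurable_const
        ((((Finset.measurable_sum _ fun i _ => measurable_pi_apply i).const_mul
          _).sub measurable_const).pow_const 2)
    have h := (mom_group_indep X hmeas hindep).comp
      (fun _ => fun v : Fin m → ℝ =>
        ({v : Fin m → ℝ | ε2 < ((m : ℝ)⁻¹ * ∑ i : Fin m, v i - μ) ^ 2}).indicator
          (fun _ => (1:ℝ)) v)
      (fun _ => hζ)
    have hfe : Z = fun j => (fun v : Fin m → ℝ =>
        ({v : Fin m → ℝ | ε2 < ((m : ℝ)⁻¹ * ∑ i : Fin m, v i - μ) ^ 2}).indicator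
          (fun _ => (1:ℝ)) v) ∘ (fun (ω : Ω) (i : Fin m) => X (j, i) ω) := by
      funext j ω
      rw [hZ]
      by_cases hc : ε2 < (Y' j ω - μ) ^ 2
      · simp only [Function.comp_apply, Set.indicator_apply, Set.mem_setOf_eq, hA, hY']
      · simp only [Function.comp_apply, Set.indicator_apply, Set.mem_setOf_eq, hA, hY']
    rw [hfe]
    exact h
  set t : ℝ := Real.log 3 with ht
  have ht0 : 0 ≤ t := Real.log_nonneg (by norm_num)
  have hexp3 : Real.exp t = 3 := Real.exp_log (by norm_num)
  -- pointwise form of exp (t * Z j)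
  have hexp : ∀ j, (fun ω => Real.exp (t * Z j ω))
      = fun ω => 1 + (A j).indicator (fun _ => (2:ℝ)) ω := by
    intro j
    funext ω
    rw [hZ]
    simp only [Set.indicator_apply]
    split_ifs with h
    · rw [mul_one, hexp3]; norm_num
    · simp
  have hExpInt : ∀ j, Integrable (fun ω => Real.exp (t * Z j ω)) ℙ := by
    intro j
    rw [hexp j]
    exact (integrable_const 1).add ((integrable_const (2:ℝ)).indicator (hAmeas j))
  -- mgf bound
  have hmgf : ∀ j, mgf (Z j) ℙ t ≤ 3 / 2 := by
    intro j
    have h14 : (ℙ (A j)).toReal ≤ 1 / 4 :=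
      ENNReal.toReal_le_of_le_ofReal (by norm_num) (hAbound j)
    have : mgf (Z j) ℙ t = 1 + 2 * (ℙ (A j)).toReal := by
      rw [mgf, hexp j, integral_add (integrable_const 1)
        ((integrable_const (2:ℝ)).indicator (hAmeas j)),
        integral_const, integral_indicator_const _ (hAmeas j)]
      simp [mul_comm, measureReal_def]
    rw [this]; linarith
  -- Chernoff bound
  set S : Set Ω := {ω | (k : ℝ) / 2 ≤ (∑ j, Z j) ω} with hS
  have hsum_eq : (fun ω => ∑ j, Z j ω) = (∑ j, Z j) := by
    funext ω; rw [Finset.sum_apply]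
  have hSmeas : MeasurableSet S := by
    refine measurableSet_le measurable_const ?_
    rw [← hsum_eq]
    exact Finset.measurable_sum _ fun j _ => hZmeas j
  have hsumZle : ∀ ω, (∑ j, Z j) ω ≤ k := by
    intro ω
    rw [Finset.sum_apply]
    calc ∑ j, Z j ω ≤ ∑ _j : Fin k, (1:ℝ) := by
          refine Finset.sum_le_sum fun j _ => ?_
          rw [hZ]; simp only [Set.indicator_apply]; split_ifs <;> norm_num
      _ = k := by simp
  have hsumZnonneg : ∀ ω, 0 ≤ (∑ j, Z j) ω := by
    intro ω
    rw [Finset.sum_apply]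
    refine Finset.sum_nonneg fun j _ => ?_
    rw [hZ]; simp only [Set.indicator_apply]; split_ifs <;> norm_num
  have hintsum : Integrable (fun ω => Real.exp (t * (∑ j, Z j) ω)) ℙ := by
    refine Integrable.mono' (integrable_const (Real.exp (t * k)))
      ((((hsum_eq ▸ Finset.measurable_sum Finset.univ fun j _ => hZmeas j) :
        Measurable (∑ j, Z j)).const_mul t).exp.aestronglyMeasurable) ?_
    refine Filter.Eventually.of_forall fun ω => ?_
    rw [Real.norm_eq_abs, abs_of_pos (Real.exp_pos _), Real.exp_le_exp]
    exact mul_le_mul_of_nonneg_left (hsumZle ω) ht0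
  have hchern : (ℙ S).toReal ≤ Real.exp (-t * ((k:ℝ)/2)) * (3/2) ^ k := by
    have h := measure_ge_le_exp_mul_mgf (μ := (ℙ : Measure Ω)) (X := ∑ j, Z j)
      ((k:ℝ)/2) ht0 hintsum
    refine le_trans h ?_
    have hprod : mgf (∑ j, Z j) ℙ t = ∏ j, mgf (Z j) ℙ t :=
      hZindep.mgf_sum hZmeas Finset.univ
    rw [hprod]
    refine mul_le_mul_of_nonneg_left ?_ (le_of_lt (Real.exp_pos _))
    calc ∏ j, mgf (Z j) ℙ t ≤ ∏ _j : Fin k, (3/2 : ℝ) :=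
          Finset.prod_le_prod (fun j _ => mgf_nonneg) (fun j _ => hmgf j)
      _ = (3/2) ^ k := by rw [Finset.prod_const, card_univ, Fintype.card_fin]
  -- numeric bound: exp(-t k/2) (3/2)^k ≤ δ
  have hrδ : Real.exp (-t * ((k:ℝ)/2)) * (3/2) ^ k ≤ δ := by
    have hδeq : δ = Real.exp (-(k:ℝ)/8) := by
      have : Real.log δ = -(k:ℝ)/8 := by
        rw [one_div, Real.log_inv] at hlog; linarith
      rw [← this, Real.exp_log hδ0]
    have h32 : ((3:ℝ)/2) ^ k = Real.exp ((k:ℝ) * Real.log (3/2)) := by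
      rw [Real.exp_nat_mul, Real.exp_log (by norm_num)]
    rw [hδeq, h32, ← Real.exp_add, Real.exp_le_exp]
    have hl32 : Real.log (3/2 : ℝ) = Real.log 3 - Real.log 2 :=
      Real.log_div (by norm_num) (by norm_num)
    have hl43 : (1:ℝ)/4 ≤ 2 * Real.log 2 - Real.log 3 := by
      have h1 : Real.log ((3:ℝ)/4) ≤ 3/4 - 1 :=
        Real.log_le_sub_one_of_pos (by norm_num)
      have h2 : Real.log ((3:ℝ)/4) = Real.log 3 - Real.log 4 :=
        Real.log_div (by norm_num) (by norm_num)
      have h3 : Real.log (4:ℝ) = 2 * Real.log 2 := by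
        rw [show (4:ℝ) = 2 ^ 2 by norm_num, Real.log_pow]; push_cast; ring
      rw [h2, h3] at h1
      linarith
    rw [ht, hl32]
    nlinarith [hkR, hl43]
  have hPS : ℙ S ≤ ENNReal.ofReal δ := by
    rw [← ENNReal.ofReal_toReal (measure_ne_top ℙ S)]
    exact ENNReal.ofReal_le_ofReal (hchern.trans hrδ)
  -- inclusion: complement of target event is inside S
  have hincl : {ω | (med ω - μ) ^ 2 ≤ 32 * σ ^ 2 * Real.log (1 / δ) / n}ᶜ ⊆ S := by
    intro ω hω
    simp only [Set.mem_compl_iff, Set.mem_setOf_eq, not_le, hconst] at hω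
    -- hω : ε2 < (med ω - μ)^2
    show (k : ℝ) / 2 ≤ (∑ j, Z j) ω
    by_contra hcon
    push_neg at hcon
    -- count of bad groups
    have hcount : (∑ j, Z j) ω = ((Finset.univ.filter fun j => ω ∈ A j).card : ℝ) := by
      rw [Finset.sum_apply]
      rw [← Finset.sum_boole]
      refine Finset.sum_congr rfl fun j _ => ?_
      rw [hZ]; simp [Set.indicator_apply]
    set bad := Finset.univ.filter fun j => ω ∈ A j with hbad
    set good := Finset.univ.filter fun j => ¬ ω ∈ A j with hgood
    have hbg : bad.card + good.card = k := by
      rw [hbad, hgood, Finset.card_filter_add_card_filter_not]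
      simp
    have hgoodcard : (k : ℝ) / 2 < good.card := by
      rw [hcount] at hcon
      have : (bad.card : ℝ) + good.card = k := by exact_mod_cast hbg
      linarith
    -- find a good group below and above the median
    have hfind : ∀ (s : Finset (Fin k)), (k:ℝ)/2 ≤ s.card → ∃ j ∈ s, ¬ ω ∈ A j := by
      intro s hs
      have hcard : k < good.card + s.card := by
        have : (k : ℝ) < good.card + s.card := by linarith
        exact_mod_cast this
      have hinter : 0 < (good ∩ s).card := by
        have h1 := Finset.card_union_add_card_inter good s
        have h2 : (good ∪ s).card ≤ k := by
          have := Finset.card_le_univ (good ∪ s)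
          simpa using this
        omega
      obtain ⟨j, hj⟩ := Finset.card_pos.1 hinter
      rw [Finset.mem_inter] at hj
      exact ⟨j, hj.2, (Finset.mem_filter.1 hj.1).2⟩
    obtain ⟨j1, hj1mem, hj1⟩ := hfind _ (hmed ω).1
    obtain ⟨j2, hj2mem, hj2⟩ := hfind _ (hmed ω).2
    rw [Finset.mem_filter] at hj1mem hj2mem
    have hYY'1 : Y j1 ω = Y' j1 ω := hY j1 ω
    have hYY'2 : Y j2 ω = Y' j2 ω := hY j2 ω
    have hj1le : Y' j1 ω ≤ med ω := hYY'1 ▸ hj1mem.2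
    have hj2ge : med ω ≤ Y' j2 ω := hYY'2 ▸ hj2mem.2
    have hj1sq : (Y' j1 ω - μ) ^ 2 ≤ ε2 := not_lt.1 hj1
    have hj2sq : (Y' j2 ω - μ) ^ 2 ≤ ε2 := not_lt.1 hj2
    rcases le_or_gt μ (med ω) with hcase | hcase
    · nlinarith
    · nlinarith
  -- finish
  have hcompl : Sᶜ ⊆ {ω | (med ω - μ) ^ 2 ≤ 32 * σ ^ 2 * Real.log (1 / δ) / n} :=
    Set.compl_subset_comm.1 hincl
  calc ENNReal.ofReal (1 - δ) ≤ 1 - ENNReal.ofReal δ := by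
        refine ENNReal.le_sub_of_add_le_right ENNReal.ofReal_ne_top ?_
        rw [← ENNReal.ofReal_add (by linarith) hδ0.le]
        simp
    _ ≤ 1 - ℙ S := tsub_le_tsub_left hPS 1
    _ = ℙ Sᶜ := (prob_compl_eq_one_sub hSmeas).symm
    _ ≤ ℙ {ω | (med ω - μ) ^ 2 ≤ 32 * σ ^ 2 * Real.log (1 / δ) / n} := measure_mono hcompl
end

section
/- Let μ̄₁, ..., μ̄_k be independent ℝ^p-valued random variables each satisfying P(‖μ̄_i − μ‖ ≤ ε) ≥ 2/3. Define r_i = min{r ≥ 0 : at least k/2 of the points μ̄₁,...,μ̄_k lie in the closed ball B(μ̄_i, r)}, and let i* = argmin_i r_i. Then P(‖μ̄_{i*} − μ‖ ≤ 3ε) ≥ 1 − exp(−k/18). -/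
open MeasureTheory ProbabilityTheory Finset

/-- Robust distance approximation. If `μ̄₁, ..., μ̄_k` are independent `ℝ^p`-valued
random variables with `P(‖μ̄ᵢ − μ‖ ≤ ε) ≥ 2/3` for all `i`, `rᵢ` is the smallest radius `r ≥ 0`
such that the ball `B(μ̄ᵢ, r)` contains at least `k/2` of the points, and `i*` minimizes `rᵢ`,
then `P(‖μ̄_{i*} − μ‖ ≤ 3ε) ≥ 1 − exp(−k/18)`. -/
theorem robust_distance_approximation
    {Ω : Type*} [MeasureSpace Ω] [IsProbabilityMeasure (ℙ : Measure Ω)]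
    (p k : ℕ) (hk : 0 < k) (ε : ℝ) (hε : 0 < ε)
    (μ : EuclideanSpace ℝ (Fin p))
    (Y : Fin k → Ω → EuclideanSpace ℝ (Fin p))
    (hmeas : ∀ i, Measurable (Y i))
    (hindep : iIndepFun Y ℙ)
    (hconc : ∀ i, ENNReal.ofReal (2 / 3) ≤ ℙ {ω | ‖Y i ω - μ‖ ≤ ε})
    (r : Fin k → Ω → ℝ)
    (hr : ∀ i ω, IsLeast
      {ρ : ℝ | 0 ≤ ρ ∧ (k : ℝ) / 2 ≤ (Finset.univ.filter fun j => ‖Y j ω - Y i ω‖ ≤ ρ).card}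
      (r i ω))
    (istar : Ω → Fin k)
    (histar : ∀ ω i, r (istar ω) ω ≤ r i ω) :
    ENNReal.ofReal (1 - Real.exp (-(k : ℝ) / 18)) ≤
      ℙ {ω | ‖Y (istar ω) ω - μ‖ ≤ 3 * ε} := by
  classical
  set t : ℝ := Real.log 2 with ht_def
  have ht : 0 ≤ t := Real.log_nonneg one_le_two
  set g : EuclideanSpace ℝ (Fin p) → ℝ := fun x => if ‖x - μ‖ ≤ ε then 0 else 1 with hg_def
  have hg_meas : Measurable g := by
    apply Measurable.ite _ measurable_const measurable_const
    exact measurableSet_le (measurable_id.sub measurable_const).norm measurable_const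
  set Z : Fin k → Ω → ℝ := fun i ω => g (Y i ω) with hZ_def
  have hZmeas : ∀ i, Measurable (Z i) := fun i => hg_meas.comp (hmeas i)
  have hZindep : iIndepFun Z ℙ :=
    hindep.comp (fun _ => g) (fun _ => hg_meas)
  have hA : ∀ i, MeasurableSet {ω | ‖Y i ω - μ‖ ≤ ε} := fun i =>
    measurableSet_le ((hmeas i).sub measurable_const).norm measurable_const
  -- bound on probability of failure
  have hPbad : ∀ i, (ℙ {ω | ‖Y i ω - μ‖ ≤ ε}ᶜ).toReal ≤ 1 / 3 := by
    intro i
    rw [prob_compl_eq_one_sub (hA i)]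
    have h1 : (1 : ENNReal) - ℙ {ω | ‖Y i ω - μ‖ ≤ ε} ≤ 1 - ENNReal.ofReal (2 / 3) :=
      tsub_le_tsub_left (hconc i) 1
    have h2 : (1 : ENNReal) - ENNReal.ofReal (2 / 3) = ENNReal.ofReal (1 / 3) := by
      rw [← ENNReal.ofReal_one, ← ENNReal.ofReal_sub _ (by norm_num)]
      norm_num
    calc ((1 : ENNReal) - ℙ {ω | ‖Y i ω - μ‖ ≤ ε}).toReal
        ≤ (ENNReal.ofReal (1 / 3)).toReal := by
          exact ENNReal.toReal_mono (by simp [h2.symm ▸ ENNReal.ofReal_ne_top]) (h2 ▸ h1)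
      _ = 1 / 3 := by rw [ENNReal.toReal_ofReal]; norm_num
  -- exp (t * Z i ω) as 1 + indicator
  have hexpZ : ∀ i ω, Real.exp (t * Z i ω) =
      1 + ({ω | ‖Y i ω - μ‖ ≤ ε}ᶜ).indicator (fun _ => (1 : ℝ)) ω := by
    intro i ω
    by_cases h : ‖Y i ω - μ‖ ≤ ε
    · have : ω ∉ {ω | ‖Y i ω - μ‖ ≤ ε}ᶜ := by simp [h]
      simp [Z, g, h, Set.indicator_of_notMem this]
    · have hm : ω ∈ {ω | ‖Y i ω - μ‖ ≤ ε}ᶜ := by simp [h]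
      simp [Z, g, h, Set.indicator_of_mem hm, Real.exp_log two_pos]
      norm_num [ht_def, Real.exp_log two_pos]
  have hint : ∀ i, Integrable (fun ω => Real.exp (t * Z i ω)) ℙ := by
    intro i
    have : (fun ω => Real.exp (t * Z i ω)) =
        fun ω => 1 + ({ω | ‖Y i ω - μ‖ ≤ ε}ᶜ).indicator (fun _ => (1 : ℝ)) ω := by
      funext ω; exact hexpZ i ω
    rw [this]
    exact (integrable_const 1).add ((integrable_const 1).indicator (hA i).compl)
  -- mgf bound
  have hmgf : ∀ i, mgf (Z i) ℙ t ≤ 4 / 3 := by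
    intro i
    have : mgf (Z i) ℙ t = 1 + (ℙ {ω | ‖Y i ω - μ‖ ≤ ε}ᶜ).toReal := by
      rw [mgf]
      simp_rw [hexpZ i]
      rw [integral_add (integrable_const 1) ((integrable_const 1).indicator (hA i).compl),
        integral_const, integral_indicator_const _ (hA i).compl]
      simp
      rfl
    rw [this]
    linarith [hPbad i]
  -- Chernoff bound
  have hchern := measure_ge_le_exp_mul_mgf (μ := ℙ) (X := ∑ i : Fin k, Z i) ((k : ℝ) / 2) ht
    (hZindep.integrable_exp_mul_sum hZmeas (fun i _ => hint i))
  rw [hZindep.mgf_sum hZmeas] at hchern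
  -- arithmetic: exp (-t * (k/2)) * ∏ mgf ≤ exp (-k/18)
  set a : ℝ := Real.exp (t / 2) with ha_def
  have ha_pos : 0 < a := Real.exp_pos _
  have ha_sq : a * a = 2 := by
    rw [ha_def, ← Real.exp_add]
    norm_num [Real.exp_log two_pos]
    exact Real.exp_log two_pos
  have ha_ge : 24 / 17 ≤ a := by nlinarith
  have hainv : a⁻¹ ≤ 17 / 24 := by
    rw [inv_le_comm₀ ha_pos (by norm_num)]
    linarith
  have hfac : Real.exp (-t / 2) * (4 / 3) ≤ Real.exp (-1 / 18) := by
    have h1 : Real.exp (-t / 2) = a⁻¹ := by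
      rw [ha_def, ← Real.exp_neg]; ring_nf
    have h2 : (17 : ℝ) / 18 ≤ Real.exp (-1 / 18) := by
      have := Real.add_one_le_exp (-1 / 18 : ℝ)
      linarith
    have h3 : Real.exp (-t / 2) * (4 / 3) ≤ 17 / 24 * (4 / 3) := by
      rw [h1]; linarith
    linarith
  have hprod : ∏ i : Fin k, mgf (Z i) ℙ t ≤ (4 / 3) ^ k := by
    calc ∏ i : Fin k, mgf (Z i) ℙ t ≤ ∏ _i : Fin k, (4 / 3 : ℝ) :=
          Finset.prod_le_prod (fun i _ => mgf_nonneg) (fun i _ => hmgf i)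
      _ = (4 / 3) ^ k := by simp [div_pow]
  have hrhs : Real.exp (-t * ((k : ℝ) / 2)) * ∏ i : Fin k, mgf (Z i) ℙ t
      ≤ Real.exp (-(k : ℝ) / 18) := by
    have h1 : Real.exp (-t * ((k : ℝ) / 2)) = Real.exp (-t / 2) ^ k := by
      rw [← Real.exp_nat_mul]; ring_nf
    have h2 : Real.exp (-t * ((k : ℝ) / 2)) * ∏ i : Fin k, mgf (Z i) ℙ t
        ≤ Real.exp (-t / 2) ^ k * (4 / 3) ^ k := by
      rw [h1]
      exact mul_le_mul_of_nonneg_left hprod (by positivity)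
    have h3 : Real.exp (-t / 2) ^ k * (4 / 3) ^ k = (Real.exp (-t / 2) * (4 / 3)) ^ k := by
      rw [mul_pow]
    have h4 : (Real.exp (-t / 2) * (4 / 3)) ^ k ≤ Real.exp (-1 / 18) ^ k :=
      pow_le_pow_left₀ (by positivity) hfac k
    have h5 : Real.exp (-1 / 18 : ℝ) ^ k = Real.exp (-(k : ℝ) / 18) := by
      rw [← Real.exp_nat_mul]; ring_nf
    linarith [h2, h3 ▸ h4, h5 ▸ (h3 ▸ h4)]
  set B : Set Ω := {ω | (k : ℝ) / 2 ≤ (∑ i : Fin k, Z i) ω} with hB_def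
  have hPB_toReal : (ℙ B).toReal ≤ Real.exp (-(k : ℝ) / 18) := le_trans hchern hrhs
  have hPB : ℙ B ≤ ENNReal.ofReal (Real.exp (-(k : ℝ) / 18)) := by
    rw [← ENNReal.ofReal_toReal (measure_ne_top ℙ B)]
    exact ENNReal.ofReal_le_ofReal hPB_toReal
  have hSm : Measurable fun ω => (∑ i : Fin k, Z i) ω := by
    simp only [Finset.sum_apply]
    exact Finset.measurable_sum _ (fun i _ => hZmeas i)
  have hBmeas : MeasurableSet B := measurableSet_le measurable_const hSm
  -- deterministic part: Bᶜ ⊆ good event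
  have hsub : Bᶜ ⊆ {ω | ‖Y (istar ω) ω - μ‖ ≤ 3 * ε} := by
    intro ω hω
    have hωB : (∑ i : Fin k, Z i) ω < (k : ℝ) / 2 := lt_of_not_ge hω
    set G : Finset (Fin k) := univ.filter (fun j => ‖Y j ω - μ‖ ≤ ε) with hG_def
    have hsum : (∑ i : Fin k, Z i) ω =
        ((univ.filter fun j => ¬ ‖Y j ω - μ‖ ≤ ε).card : ℝ) := by
      have hZval : ∀ i, Z i ω = if ¬ ‖Y i ω - μ‖ ≤ ε then (1:ℝ) else 0 := by
        intro i
        by_cases h : ‖Y i ω - μ‖ ≤ ε <;> simp [Z, g, h]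
      rw [Finset.sum_apply]
      rw [Finset.sum_congr rfl (fun i _ => hZval i), Finset.sum_boole]
    have hcards : G.card + (univ.filter fun j => ¬ ‖Y j ω - μ‖ ≤ ε).card = k := by
      rw [hG_def, Finset.card_filter_add_card_filter_not]
      simp
    have hGcard : (k : ℝ) / 2 < (G.card : ℝ) := by
      have h1 : ((univ.filter fun j => ¬ ‖Y j ω - μ‖ ≤ ε).card : ℝ) < (k : ℝ) / 2 :=
        hsum ▸ hωB
      have h2 : (G.card : ℝ) + ((univ.filter fun j => ¬ ‖Y j ω - μ‖ ≤ ε).card : ℝ) = k := by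
        exact_mod_cast hcards
      linarith
    have hGne : G.Nonempty := by
      rw [← Finset.card_pos]
      have : (0 : ℝ) < (G.card : ℝ) := by
        have : (0 : ℝ) < (k : ℝ) / 2 := by positivity
        linarith
      exact_mod_cast this
    obtain ⟨i, hi⟩ := hGne
    have hiε : ‖Y i ω - μ‖ ≤ ε := (Finset.mem_filter.mp hi).2
    -- r i ω ≤ 2ε
    have hsubG : G ⊆ univ.filter (fun j => ‖Y j ω - Y i ω‖ ≤ 2 * ε) := by
      intro j hj
      have hjε : ‖Y j ω - μ‖ ≤ ε := (Finset.mem_filter.mp hj).2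
      rw [Finset.mem_filter]
      refine ⟨Finset.mem_univ _, ?_⟩
      have : Y j ω - Y i ω = (Y j ω - μ) - (Y i ω - μ) := by abel
      rw [this]
      calc ‖(Y j ω - μ) - (Y i ω - μ)‖ ≤ ‖Y j ω - μ‖ + ‖Y i ω - μ‖ := norm_sub_le _ _
        _ ≤ 2 * ε := by linarith
    have hri : r i ω ≤ 2 * ε := by
      apply (hr i ω).2
      refine ⟨by positivity, ?_⟩
      have := Finset.card_le_card hsubG
      have : (G.card : ℝ) ≤ ((univ.filter (fun j => ‖Y j ω - Y i ω‖ ≤ 2 * ε)).card : ℝ) := by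
        exact_mod_cast this
      linarith
    have hρ : r (istar ω) ω ≤ 2 * ε := le_trans (histar ω i) hri
    obtain ⟨hρ0, hρcard⟩ := (hr (istar ω) ω).1
    set T : Finset (Fin k) := univ.filter (fun j => ‖Y j ω - Y (istar ω) ω‖ ≤ r (istar ω) ω)
      with hT_def
    -- T and G intersect
    have hTG : (T ∩ G).Nonempty := by
      rw [← Finset.card_pos]
      have h1 := Finset.card_union_add_card_inter T G
      have h2 : (T ∪ G).card ≤ k := by
        calc (T ∪ G).card ≤ (univ : Finset (Fin k)).card := Finset.card_le_univ _
          _ = k := by simp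
      have h3 : (k : ℝ) / 2 ≤ (T.card : ℝ) := hρcard
      have h4 : ((T ∪ G).card : ℝ) + ((T ∩ G).card : ℝ) = (T.card : ℝ) + (G.card : ℝ) := by
        exact_mod_cast h1
      have h5 : ((T ∪ G).card : ℝ) ≤ (k : ℝ) := by exact_mod_cast h2
      have : (0 : ℝ) < ((T ∩ G).card : ℝ) := by linarith
      exact_mod_cast this
    obtain ⟨j, hj⟩ := hTG
    have hjT : ‖Y j ω - Y (istar ω) ω‖ ≤ r (istar ω) ω :=
      (Finset.mem_filter.mp (Finset.mem_inter.mp hj).1).2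
    have hjG : ‖Y j ω - μ‖ ≤ ε :=
      (Finset.mem_filter.mp (Finset.mem_inter.mp hj).2).2
    show ‖Y (istar ω) ω - μ‖ ≤ 3 * ε
    have heq : Y (istar ω) ω - μ = (Y j ω - μ) - (Y j ω - Y (istar ω) ω) := by abel
    rw [heq]
    calc ‖(Y j ω - μ) - (Y j ω - Y (istar ω) ω)‖
        ≤ ‖Y j ω - μ‖ + ‖Y j ω - Y (istar ω) ω‖ := norm_sub_le _ _
      _ ≤ ε + r (istar ω) ω := by linarith
      _ ≤ 3 * ε := by linarith
  -- conclude
  calc ENNReal.ofReal (1 - Real.exp (-(k : ℝ) / 18))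
      = 1 - ENNReal.ofReal (Real.exp (-(k : ℝ) / 18)) := by
        rw [← ENNReal.ofReal_one, ← ENNReal.ofReal_sub _ (Real.exp_nonneg _)]
    _ ≤ 1 - ℙ B := tsub_le_tsub_left hPB 1
    _ = ℙ Bᶜ := (prob_compl_eq_one_sub hBmeas).symm
    _ ≤ ℙ {ω | ‖Y (istar ω) ω - μ‖ ≤ 3 * ε} := measure_mono hsub
end

section
/- Let F = h + r where h : ℝ^d → ℝ is convex and L-smooth and r is convex. Suppose w_{t+1} minimizes w ↦ ⟨v, w⟩ + (1/(2η))‖w − w_t‖² + r(w) with η ≤ 1/(2L), where v is an arbitrary vector (an approximation of ∇h(w_t)). Then for every w: F(w_{t+1}) − F(w) ≤ (1/(2η))(‖w − w_t‖² − ‖w − w_{t+1}‖²) + η‖∇h(w_t) − v‖² + ⟨∇h(w_t) − v, w_t − w⟩. -/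
open scoped RealInnerProductSpace
open Set Filter Topology

private lemma line_hasDerivAt' {d : ℕ} (h : EuclideanSpace ℝ (Fin d) → ℝ)
    (g x u : EuclideanSpace ℝ (Fin d)) (t : ℝ)
    (hg : HasGradientAt h g (x + t • u)) :
    HasDerivAt (fun s : ℝ => h (x + s • u)) ⟪g, u⟫ t := by
  have hline : HasDerivAt (fun s : ℝ => x + s • u) u t := by
    simpa using ((hasDerivAt_id t).smul_const u).const_add x
  have := hg.hasFDerivAt.comp_hasDerivAt t hline
  simp at this
  exact this

private lemma grad_convex_le' {d : ℕ} (h : EuclideanSpace ℝ (Fin d) → ℝ)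
    (gradh : EuclideanSpace ℝ (Fin d) → EuclideanSpace ℝ (Fin d))
    (hconv : ConvexOn ℝ Set.univ h)
    (hgrad : ∀ w, HasGradientAt h (gradh w) w)
    (x y : EuclideanSpace ℝ (Fin d)) :
    h x + ⟪gradh x, y - x⟫ ≤ h y := by
  set ψ : ℝ → ℝ := fun t => h (x + t • (y - x)) with hψ
  have hψconv : ConvexOn ℝ Set.univ ψ := by
    have := hconv.comp_affineMap (AffineMap.lineMap x y : ℝ →ᵃ[ℝ] _)
    have heq : (h ∘ (AffineMap.lineMap x y : ℝ →ᵃ[ℝ] _)) = ψ := by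
      funext t
      simp [hψ, AffineMap.lineMap_apply, add_comm]
    rw [heq] at this
    simpa using this
  have hd : HasDerivAt ψ ⟪gradh x, y - x⟫ 0 := by
    have := line_hasDerivAt' h (gradh x) x (y - x) 0 (by simpa using hgrad x)
    simpa using this
  have := hψconv.le_slope_of_hasDerivAt (mem_univ (0:ℝ)) (mem_univ (1:ℝ)) zero_lt_one hd
  rw [slope_def_field] at this
  have h1 : ψ 1 = h y := by simp [hψ]
  have h0 : ψ 0 = h x := by simp [hψ]
  rw [h1, h0] at this
  simp only [sub_zero, div_one] at this
  linarith

private lemma smooth_upper' {d : ℕ} (h : EuclideanSpace ℝ (Fin d) → ℝ)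
    (gradh : EuclideanSpace ℝ (Fin d) → EuclideanSpace ℝ (Fin d)) (L : ℝ)
    (hgrad : ∀ w, HasGradientAt h (gradh w) w)
    (hsmooth : ∀ w w', ‖gradh w - gradh w'‖ ≤ L * ‖w - w'‖)
    (x y : EuclideanSpace ℝ (Fin d)) :
    h y ≤ h x + ⟪gradh x, y - x⟫ + L / 2 * ‖y - x‖ ^ 2 := by
  set u := y - x with hu
  set φ : ℝ → ℝ := fun t => h (x + t • u) - t * ⟪gradh x, u⟫ - L * t ^ 2 / 2 * ‖u‖ ^ 2 with hφ
  have hφd : ∀ t : ℝ, HasDerivAt φ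
      (⟪gradh (x + t • u), u⟫ - ⟪gradh x, u⟫ - L * t * ‖u‖ ^ 2) t := by
    intro t
    have h1 := line_hasDerivAt' h (gradh (x + t • u)) x u t (hgrad _)
    have h2 : HasDerivAt (fun s : ℝ => s * ⟪gradh x, u⟫) ⟪gradh x, u⟫ t := by
      simpa using (hasDerivAt_id t).mul_const (⟪gradh x, u⟫ : ℝ)
    have h3 : HasDerivAt (fun s : ℝ => L * s ^ 2 / 2 * ‖u‖ ^ 2) (L * t * ‖u‖ ^ 2) t := by
      have := (((hasDerivAt_pow 2 t).const_mul L).div_const 2).mul_const (‖u‖ ^ 2 : ℝ)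
      exact this.congr_deriv (by ring)
    exact (h1.sub h2).sub h3
  have hφdiff : Differentiable ℝ φ := fun t => (hφd t).differentiableAt
  have mono : AntitoneOn φ (Icc (0:ℝ) 1) := by
    apply antitoneOn_of_deriv_nonpos (convex_Icc 0 1) hφdiff.continuous.continuousOn
      (hφdiff.differentiableOn)
    intro t ht
    rw [interior_Icc] at ht
    rw [(hφd t).deriv]
    have hb : ⟪gradh (x + t • u) - gradh x, u⟫ ≤ L * t * ‖u‖ ^ 2 := by
      calc ⟪gradh (x + t • u) - gradh x, u⟫ ≤ ‖gradh (x + t • u) - gradh x‖ * ‖u‖ :=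
            real_inner_le_norm _ _
        _ ≤ (L * ‖(x + t • u) - x‖) * ‖u‖ := by
            have := hsmooth (x + t • u) x
            have hn : (0:ℝ) ≤ ‖u‖ := norm_nonneg _
            nlinarith
        _ = L * t * ‖u‖ ^ 2 := by
            have : ‖(x + t • u) - x‖ = t * ‖u‖ := by
              simp [norm_smul, abs_of_pos ht.1]
            rw [this]; ring
    rw [inner_sub_left] at hb
    linarith
  have := mono (left_mem_Icc.mpr zero_le_one) (right_mem_Icc.mpr zero_le_one) zero_le_one
  have h0 : φ 0 = h x := by simp [hφ]
  have h1 : φ 1 = h y - ⟪gradh x, u⟫ - L / 2 * ‖u‖ ^ 2 := by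
    simp only [hφ, one_smul, one_pow, mul_one, one_mul]
    rw [show x + u = y by rw [hu]; abel]
  rw [h0, h1] at this
  linarith

private lemma combo_sq'' {d : ℕ} (a b : EuclideanSpace ℝ (Fin d)) (t : ℝ) :
    ‖t • a + (1 - t) • b‖ ^ 2 = t * ‖a‖ ^ 2 + (1 - t) * ‖b‖ ^ 2 - t * (1 - t) * ‖a - b‖ ^ 2 := by
  have e : ∀ z : EuclideanSpace ℝ (Fin d), ‖z‖ ^ 2 = ⟪z, z⟫ := fun z =>
    (real_inner_self_eq_norm_sq z).symm
  rw [e, e, e, e]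
  simp only [inner_add_left, inner_add_right, inner_sub_left, inner_sub_right,
    real_inner_smul_left, real_inner_smul_right]
  rw [real_inner_comm b a]
  ring

private lemma three_point' {d : ℕ} (r : EuclideanSpace ℝ (Fin d) → ℝ) (η : ℝ) (hη : 0 < η)
    (hrconv : ConvexOn ℝ Set.univ r)
    (v wt w₁ : EuclideanSpace ℝ (Fin d))
    (hmin : ∀ w, ⟪v, w₁⟫ + 1 / (2 * η) * ‖w₁ - wt‖ ^ 2 + r w₁ ≤
                 ⟪v, w⟫ + 1 / (2 * η) * ‖w - wt‖ ^ 2 + r w) :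
    ∀ w, (⟪v, w₁⟫ + 1 / (2 * η) * ‖w₁ - wt‖ ^ 2 + r w₁)
    + 1 / (2 * η) * ‖w - w₁‖ ^ 2 ≤ ⟪v, w⟫ + 1 / (2 * η) * ‖w - wt‖ ^ 2 + r w := by
  intro w
  set C : ℝ := ‖w - w₁‖ ^ 2 with hC
  set P : EuclideanSpace ℝ (Fin d) → ℝ :=
    fun z => ⟪v, z⟫ + 1 / (2 * η) * ‖z - wt‖ ^ 2 + r z with hP
  have key : ∀ t ∈ Ioc (0:ℝ) 1, P w₁ + (1 - t) * (1 / (2 * η) * C) ≤ P w := by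
    intro t ht
    set z := t • w + (1 - t) • w₁ with hz
    have hz1 : z - wt = t • (w - wt) + (1 - t) • (w₁ - wt) := by
      rw [hz]; module
    have hnorm : ‖z - wt‖ ^ 2 =
        t * ‖w - wt‖ ^ 2 + (1 - t) * ‖w₁ - wt‖ ^ 2 - t * (1 - t) * C := by
      rw [hz1, combo_sq'' (w - wt) (w₁ - wt) t, hC,
        show (w - wt) - (w₁ - wt) = w - w₁ by abel]
    have hr : r z ≤ t * r w + (1 - t) * r w₁ :=
      hrconv.2 (mem_univ w) (mem_univ w₁) ht.1.le (by linarith [ht.2]) (by ring)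
    have hv : ⟪v, z⟫ = t * ⟪v, w⟫ + (1 - t) * ⟪v, w₁⟫ := by
      rw [hz]; simp only [inner_add_right, real_inner_smul_right]
    have hm := hmin z
    rw [hnorm, hv] at hm
    have h5 : t * (P w₁ + (1 - t) * (1 / (2 * η) * C) - P w) ≤ 0 := by
      simp only [hP]; nlinarith [hm, hr]
    by_contra hc
    push_neg at hc
    nlinarith [ht.1, h5]
  have hcont : Continuous (fun t : ℝ => P w₁ + (1 - t) * (1 / (2 * η) * C)) := by
    fun_prop
  have lim : Tendsto (fun t : ℝ => P w₁ + (1 - t) * (1 / (2 * η) * C)) (𝓝[>] (0:ℝ))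
      (𝓝 (P w₁ + (1 - 0) * (1 / (2 * η) * C))) :=
    (hcont.tendsto 0).mono_left nhdsWithin_le_nhds
  have hfin : P w₁ + (1 - 0) * (1 / (2 * η) * C) ≤ P w := by
    refine le_of_tendsto lim ?_
    filter_upwards [Ioc_mem_nhdsGT_of_mem (by simp : (0:ℝ) ∈ Ico (0:ℝ) 1)] with t ht
    exact key t ht
  simpa only [hP, sub_zero, one_mul] using hfin

/-- One-step inexact proximal gradient bound. Let `F = h + r` with `h` convex and
`L`-smooth and `r` convex. If `w₁` minimizes `w ↦ ⟨v, w⟩ + (1/(2η))‖w − wₜ‖² + r(w)` with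
`η ≤ 1/(2L)`, then for every `w`:
`F(w₁) − F(w) ≤ (1/(2η))(‖w − wₜ‖² − ‖w − w₁‖²) + η‖∇h(wₜ) − v‖² + ⟨∇h(wₜ) − v, wₜ − w⟩`. -/
theorem inexact_prox_grad_one_step {d : ℕ}
    (h : EuclideanSpace ℝ (Fin d) → ℝ) (gradh : EuclideanSpace ℝ (Fin d) → EuclideanSpace ℝ (Fin d))
    (r : EuclideanSpace ℝ (Fin d) → ℝ)
    (L η : ℝ) (hL : 0 < L) (hη : 0 < η) (hηL : η ≤ 1 / (2 * L))
    (hconv : ConvexOn ℝ Set.univ h) (hrconv : ConvexOn ℝ Set.univ r)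
    (hgrad : ∀ w, HasGradientAt h (gradh w) w)
    (hsmooth : ∀ w w', ‖gradh w - gradh w'‖ ≤ L * ‖w - w'‖)
    (v wt w₁ : EuclideanSpace ℝ (Fin d))
    (hmin : ∀ w, ⟪v, w₁⟫ + 1 / (2 * η) * ‖w₁ - wt‖ ^ 2 + r w₁ ≤
                 ⟪v, w⟫ + 1 / (2 * η) * ‖w - wt‖ ^ 2 + r w) :
    ∀ w, (h w₁ + r w₁) - (h w + r w) ≤
      1 / (2 * η) * (‖w - wt‖ ^ 2 - ‖w - w₁‖ ^ 2)
      + η * ‖gradh wt - v‖ ^ 2 + ⟪gradh wt - v, wt - w⟫ := by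
  intro w
  set g := gradh wt with hg
  -- smoothness upper bound at (wt, w₁)
  have A1 : h w₁ ≤ h wt + ⟪g, w₁ - wt⟫ + L / 2 * ‖w₁ - wt‖ ^ 2 :=
    smooth_upper' h gradh L hgrad hsmooth wt w₁
  -- convexity lower bound at (wt, w)
  have A2 : h wt + ⟪g, w - wt⟫ ≤ h w := grad_convex_le' h gradh hconv hgrad wt w
  -- three-point inequality from strong convexity of the prox objective
  have A3 := three_point' r η hη hrconv v wt w₁ hmin w
  -- Young's inequality
  have A4 : ⟪g - v, w₁ - wt⟫ ≤ η * ‖g - v‖ ^ 2 + 1 / (4 * η) * ‖w₁ - wt‖ ^ 2 := by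
    have h1 := real_inner_le_norm (g - v) (w₁ - wt)
    have hkey : 4 * η * (η * ‖g - v‖ ^ 2 + 1 / (4 * η) * ‖w₁ - wt‖ ^ 2 - ‖g - v‖ * ‖w₁ - wt‖)
        = (2 * η * ‖g - v‖ - ‖w₁ - wt‖) ^ 2 := by
      field_simp
      ring
    nlinarith [sq_nonneg (2 * η * ‖g - v‖ - ‖w₁ - wt‖), hη, h1]
  -- inner product bookkeeping
  have A5 : ⟪g, w₁ - wt⟫ - ⟪g, w - wt⟫ =
      ⟪g - v, w₁ - wt⟫ + ⟪g - v, wt - w⟫ + ⟪v, w₁⟫ - ⟪v, w⟫ := by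
    simp only [inner_sub_left, inner_sub_right]
    ring
  -- step size condition
  have A6 : L / 2 ≤ 1 / (4 * η) := by
    rw [div_le_div_iff₀ (by norm_num) (by linarith)]
    rw [le_div_iff₀ (by linarith : (0:ℝ) < 2 * L)] at hηL
    nlinarith
  have hQ : (0:ℝ) ≤ ‖w₁ - wt‖ ^ 2 := sq_nonneg _
  have A7 : 2 * (1 / (4 * η)) = 1 / (2 * η) := by
    field_simp
    ring
  nlinarith [A1, A2, A3, A4, A5, A6, hQ, mul_nonneg (by linarith : (0:ℝ) ≤ 1 / (4 * η) - L / 2) hQ]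
end

section
/- Reference truncation bias bound: let z be an ℝ^{p×d}-valued random variable with E[z] = G and E‖z − G‖² ≤ σ̂², and let z̃₀ be a fixed matrix with ‖z̃₀ − G‖ ≤ Δ. Define ẑ = z if ‖z − z̃₀‖ ≤ Δ + λ and ẑ = z̃₀ otherwise, for some λ > 0. Then: (i) ‖ẑ − G‖ ≤ 2Δ + λ always; (ii) ‖E[ẑ − G]‖ ≤ (σ̂²/λ²)Δ + σ̂²/λ; (iii) (E‖ẑ − G‖²)^{1/2} ≤ σ̂ + Δ·σ̂/λ. -/
open MeasureTheory ProbabilityTheory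

/-- Reference truncation bias bounds. Let `z` be a random matrix (Frobenius norm)
with mean `G` and `E‖z − G‖² ≤ σ̂²`, and `z̃₀` a fixed matrix with `‖z̃₀ − G‖ ≤ Δ`. With
`ẑ = z` if `‖z − z̃₀‖ ≤ Δ + λ` and `ẑ = z̃₀` otherwise: (i) `‖ẑ − G‖ ≤ 2Δ + λ` always;
(ii) `‖E[ẑ − G]‖ ≤ (σ̂²/λ²)Δ + σ̂²/λ`; (iii) `(E‖ẑ − G‖²)^{1/2} ≤ σ̂ + Δσ̂/λ`. -/
theorem reference_truncation_bounds
    {Ω : Type*} [MeasureSpace Ω] [IsProbabilityMeasure (ℙ : Measure Ω)]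
    (p d : ℕ) (z : Ω → EuclideanSpace ℝ (Fin p × Fin d))
    (G ztilde : EuclideanSpace ℝ (Fin p × Fin d))
    (σhat Δ lam : ℝ) (hσ : 0 ≤ σhat) (hlam : 0 < lam)
    (hmeas : Measurable z)
    (hint : Integrable z ℙ) (hint2 : Integrable (fun ω => ‖z ω - G‖ ^ 2) ℙ)
    (hmean : ∫ ω, z ω ∂ℙ = G)
    (hvar : ∫ ω, ‖z ω - G‖ ^ 2 ∂ℙ ≤ σhat ^ 2)
    (href : ‖ztilde - G‖ ≤ Δ)
    (zhat : Ω → EuclideanSpace ℝ (Fin p × Fin d))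
    (hzhat : ∀ ω, zhat ω = if ‖z ω - ztilde‖ ≤ Δ + lam then z ω else ztilde) :
    (∀ ω, ‖zhat ω - G‖ ≤ 2 * Δ + lam) ∧
    ‖∫ ω, (zhat ω - G) ∂ℙ‖ ≤ σhat ^ 2 / lam ^ 2 * Δ + σhat ^ 2 / lam ∧
    Real.sqrt (∫ ω, ‖zhat ω - G‖ ^ 2 ∂ℙ) ≤ σhat + Δ * σhat / lam := by
  have hΔ : 0 ≤ Δ := le_trans (norm_nonneg _) href
  -- on the truncation event, ‖z − G‖ ≥ λ
  have hkey : ∀ ω, ¬ ‖z ω - ztilde‖ ≤ Δ + lam → lam ≤ ‖z ω - G‖ := by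
    intro ω h
    push_neg at h
    have h1 : ‖z ω - ztilde‖ ≤ ‖z ω - G‖ + ‖ztilde - G‖ := by
      have := norm_sub_le (z ω - G) (ztilde - G)
      rwa [sub_sub_sub_cancel_right] at this
    linarith
  -- (i)
  have part1 : ∀ ω, ‖zhat ω - G‖ ≤ 2 * Δ + lam := by
    intro ω
    rw [hzhat ω]
    split_ifs with h
    · have h1 : ‖z ω - G‖ ≤ ‖z ω - ztilde‖ + ‖ztilde - G‖ := by
        have := norm_add_le (z ω - ztilde) (ztilde - G)
        rwa [sub_add_sub_cancel] at this
      linarith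
    · linarith
  refine ⟨part1, ?_, ?_⟩
  -- measurability of zhat
  have hzm : Measurable zhat := by
    have : zhat = fun ω => if ‖z ω - ztilde‖ ≤ Δ + lam then z ω else ztilde :=
      funext hzhat
    rw [this]
    exact Measurable.ite
      (measurableSet_le ((hmeas.sub measurable_const).norm) measurable_const)
      hmeas measurable_const
  -- (ii)
  · have hb : ∀ ω, ‖zhat ω - z ω‖ ≤ (Δ / lam ^ 2 + 1 / lam) * ‖z ω - G‖ ^ 2 := by
      intro ω
      rw [hzhat ω]
      split_ifs with h
      · simp only [sub_self, norm_zero]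
        positivity
      · have hr : lam ≤ ‖z ω - G‖ := hkey ω h
        have h1 : ‖ztilde - z ω‖ ≤ Δ + ‖z ω - G‖ := by
          have h2 : ‖ztilde - z ω‖ ≤ ‖ztilde - G‖ + ‖z ω - G‖ := by
            have := norm_sub_le (ztilde - G) (z ω - G)
            rwa [sub_sub_sub_cancel_right] at this
          linarith
        have hr0 : 0 < lam ^ 2 := by positivity
        have e1 : Δ ≤ Δ / lam ^ 2 * ‖z ω - G‖ ^ 2 := by
          rw [div_mul_eq_mul_div, le_div_iff₀ hr0]
          nlinarith [mul_le_mul hr hr hlam.le (norm_nonneg (z ω - G)), hΔ,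
            mul_le_mul_of_nonneg_left (mul_le_mul hr hr hlam.le (norm_nonneg (z ω - G))) hΔ]
        have e2 : ‖z ω - G‖ ≤ 1 / lam * ‖z ω - G‖ ^ 2 := by
          rw [div_mul_eq_mul_div, le_div_iff₀ hlam]
          nlinarith
        have e3 : (Δ / lam ^ 2 + 1 / lam) * ‖z ω - G‖ ^ 2
            = Δ / lam ^ 2 * ‖z ω - G‖ ^ 2 + 1 / lam * ‖z ω - G‖ ^ 2 := by ring
        linarith
    have hintg : Integrable (fun ω => (Δ / lam ^ 2 + 1 / lam) * ‖z ω - G‖ ^ 2) ℙ :=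
      hint2.const_mul _
    have hintd : Integrable (fun ω => zhat ω - z ω) ℙ := by
      refine Integrable.mono' hintg ((hzm.sub hmeas).aestronglyMeasurable) ?_
      filter_upwards with ω using hb ω
    have h0 : (∫ ω, (z ω - G) ∂ℙ) = 0 := by
      rw [integral_sub hint (integrable_const G), hmean, integral_const]
      simp
    have heq : (fun ω => zhat ω - G) = fun ω => (zhat ω - z ω) + (z ω - G) := by
      funext ω; abel
    have hintzG : Integrable (fun ω => z ω - G) ℙ := hint.sub (integrable_const G)
    rw [heq, integral_add hintd hintzG, h0, add_zero]
    calc ‖∫ ω, (zhat ω - z ω) ∂ℙ‖ ≤ ∫ ω, ‖zhat ω - z ω‖ ∂ℙ :=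
          norm_integral_le_integral_norm _
      _ ≤ ∫ ω, (Δ / lam ^ 2 + 1 / lam) * ‖z ω - G‖ ^ 2 ∂ℙ := by
          refine integral_mono_of_nonneg ?_ hintg ?_
          · filter_upwards with ω using norm_nonneg _
          · filter_upwards with ω using hb ω
      _ = (Δ / lam ^ 2 + 1 / lam) * ∫ ω, ‖z ω - G‖ ^ 2 ∂ℙ := integral_const_mul _ _
      _ ≤ (Δ / lam ^ 2 + 1 / lam) * σhat ^ 2 := by
          apply mul_le_mul_of_nonneg_left hvar
          positivity
      _ = σhat ^ 2 / lam ^ 2 * Δ + σhat ^ 2 / lam := by ring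
  -- (iii)
  · have hb : ∀ ω, ‖zhat ω - G‖ ^ 2 ≤ (1 + Δ / lam) ^ 2 * ‖z ω - G‖ ^ 2 := by
      intro ω
      have hbd : ‖zhat ω - G‖ ≤ (1 + Δ / lam) * ‖z ω - G‖ := by
        rw [hzhat ω]
        split_ifs with h
        · nlinarith [norm_nonneg (z ω - G), div_nonneg hΔ hlam.le]
        · have hr : lam ≤ ‖z ω - G‖ := hkey ω h
          have h1 : Δ ≤ Δ / lam * ‖z ω - G‖ := by
            rw [div_mul_eq_mul_div, le_div_iff₀ hlam]
            nlinarith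
          nlinarith [norm_nonneg (z ω - G)]
      nlinarith [norm_nonneg (zhat ω - G), norm_nonneg (z ω - G),
        mul_nonneg (by positivity : (0:ℝ) ≤ 1 + Δ / lam) (norm_nonneg (z ω - G))]
    have hintg : Integrable (fun ω => (1 + Δ / lam) ^ 2 * ‖z ω - G‖ ^ 2) ℙ :=
      hint2.const_mul _
    have hI : (∫ ω, ‖zhat ω - G‖ ^ 2 ∂ℙ) ≤ (σhat + Δ * σhat / lam) ^ 2 := by
      calc (∫ ω, ‖zhat ω - G‖ ^ 2 ∂ℙ)
          ≤ ∫ ω, (1 + Δ / lam) ^ 2 * ‖z ω - G‖ ^ 2 ∂ℙ := by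
            refine integral_mono_of_nonneg ?_ hintg ?_
            · filter_upwards with ω using by positivity
            · filter_upwards with ω using hb ω
        _ = (1 + Δ / lam) ^ 2 * ∫ ω, ‖z ω - G‖ ^ 2 ∂ℙ := integral_const_mul _ _
        _ ≤ (1 + Δ / lam) ^ 2 * σhat ^ 2 := by
            apply mul_le_mul_of_nonneg_left hvar
            positivity
        _ = (σhat + Δ * σhat / lam) ^ 2 := by field_simp
    calc Real.sqrt (∫ ω, ‖zhat ω - G‖ ^ 2 ∂ℙ)
        ≤ Real.sqrt ((σhat + Δ * σhat / lam) ^ 2) := Real.sqrt_le_sqrt hI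
      _ = σhat + Δ * σhat / lam := Real.sqrt_sq (by positivity)
end

section
/- Expected one-step bound for biased compositional proximal gradient: suppose F = f∘g + r with f∘g convex and L-smooth, η ≤ 1/(2L), and the update w_{t+1} = argmin_w ⟨ẑᵀ∇f(ŷ), w⟩ + (1/(2η))‖w − w_t‖² + r(w), where ŷ, ẑ are independent unbiased estimators of g(w_t) and ∇g(w_t) with E‖ŷ − g(w_t)‖² ≤ σ₀²/m and E‖ẑ − ∇g(w_t)‖² ≤ σ₁²/m, E‖ẑ‖² ≤ C_g², ‖∇f‖ ≤ C_f, and ∇f is L_f-Lipschitz. Then for any fixed w: E[F(w_{t+1}) − F(w)] ≤ (1/(2η))( E‖w − w_t‖² − E‖w − w_{t+1}‖² ) + (μ/4) E‖w − w_t‖² + 2η C_f² σ₁²/m + 2η C_g² L_f² σ₀²/m + C_g² L_f² σ₀²/(μ m). -/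
open MeasureTheory ProbabilityTheory
open scoped RealInnerProductSpace

set_option linter.unusedSectionVars false
set_option linter.unusedVariables false


section aux
variable {E : Type*} [NormedAddCommGroup E] [InnerProductSpace ℝ E] [CompleteSpace E]

lemma aux_deriv_line {h : E → ℝ} {G : E → E} (hG : ∀ x, HasGradientAt h (G x) x)
    (x y : E) (t : ℝ) :
    HasDerivAt (fun t : ℝ => h (x + t • (y - x))) ⟪G (x + t • (y - x)), y - x⟫ t := by
  have hpath : HasDerivAt (fun t : ℝ => x + t • (y - x)) (y - x) t := by
    simpa using ((hasDerivAt_id t).smul_const (y - x)).const_add x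
  have := ((hG (x + t • (y - x))).hasFDerivAt.comp_hasDerivAt t hpath)
  simpa [InnerProductSpace.toDual_apply_apply, Function.comp_def] using this

lemma aux_gradient_convex {h : E → ℝ} {G : E → E}
    (hconv : ConvexOn ℝ Set.univ h) (hG : ∀ x, HasGradientAt h (G x) x) (x y : E) :
    h x + ⟪G x, y - x⟫ ≤ h y := by
  set φ : ℝ → ℝ := fun t => h (x + t • (y - x)) with hφ
  have hφconv : ConvexOn ℝ Set.univ φ := by
    have h2 := hconv.comp_affineMap (AffineMap.lineMap x y : ℝ →ᵃ[ℝ] E)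
    have heq : φ = (h ∘ (AffineMap.lineMap x y : ℝ →ᵃ[ℝ] E)) := by
      funext t
      simp [φ, AffineMap.lineMap_apply, add_comm, vsub_eq_sub, vadd_eq_add]
    rw [heq]
    simpa using h2
  have hs := hφconv.le_slope_of_hasDerivAt (Set.mem_univ (0:ℝ)) (Set.mem_univ (1:ℝ))
    one_pos (by simpa using aux_deriv_line hG x y 0)
  rw [slope_def_field] at hs
  have h0 : φ 0 = h x := by simp [φ]
  have h1 : φ 1 = h y := by
    have : x + (1:ℝ) • (y - x) = y := by rw [one_smul]; abel
    simp [φ, this]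
  rw [h0, h1] at hs
  have : ⟪G x, y - x⟫ ≤ h y - h x := by simpa using hs
  linarith

lemma aux_descent {h : E → ℝ} {G : E → E} {L : ℝ}
    (hG : ∀ x, HasGradientAt h (G x) x)
    (hLip : ∀ x y, ‖G x - G y‖ ≤ L * ‖x - y‖) (x y : E) :
    h y ≤ h x + ⟪G x, y - x⟫ + L / 2 * ‖y - x‖ ^ 2 := by
  set ψ : ℝ → ℝ := fun t =>
    h (x + t • (y - x)) - t * ⟪G x, y - x⟫ - L * ‖y - x‖ ^ 2 * t ^ 2 / 2 with hψ
  have hψd : ∀ t, HasDerivAt ψ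
      (⟪G (x + t • (y - x)), y - x⟫ - ⟪G x, y - x⟫ - L * ‖y - x‖ ^ 2 * t) t := by
    intro t
    have h1 := aux_deriv_line hG x y t
    have h2 : HasDerivAt (fun t : ℝ => t * ⟪G x, y - x⟫) ⟪G x, y - x⟫ t := by
      simpa using (hasDerivAt_id t).mul_const (⟪G x, y - x⟫)
    have h3 : HasDerivAt (fun t : ℝ => L * ‖y - x‖ ^ 2 * t ^ 2 / 2)
        (L * ‖y - x‖ ^ 2 * t) t := by
      have h4 := ((hasDerivAt_pow 2 t).const_mul (L * ‖y - x‖ ^ 2)).div_const 2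
      refine h4.congr_deriv ?_
      push_cast
      ring
    exact (h1.sub h2).sub h3
  have hψdiff : Differentiable ℝ ψ := fun t => (hψd t).differentiableAt
  have hanti : AntitoneOn ψ (Set.Icc (0:ℝ) 1) := by
    apply antitoneOn_of_deriv_nonpos (convex_Icc 0 1) hψdiff.continuous.continuousOn
    · exact fun t _ => (hψdiff t).differentiableWithinAt
    · intro t ht
      rw [interior_Icc] at ht
      rw [(hψd t).deriv]
      have hb : ⟪G (x + t • (y - x)) - G x, y - x⟫ ≤ L * ‖y - x‖ ^ 2 * t := by
        calc ⟪G (x + t • (y - x)) - G x, y - x⟫ ≤ ‖G (x + t • (y - x)) - G x‖ * ‖y - x‖ :=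
              real_inner_le_norm _ _
          _ ≤ (L * ‖x + t • (y - x) - x‖) * ‖y - x‖ :=
              mul_le_mul_of_nonneg_right (hLip _ _) (norm_nonneg _)
          _ = L * ‖y - x‖ ^ 2 * t := by
              rw [add_sub_cancel_left, norm_smul, Real.norm_eq_abs, abs_of_pos ht.1]
              ring
      rw [inner_sub_left] at hb
      linarith
  have hfin := hanti (Set.mem_Icc.2 ⟨le_refl 0, zero_le_one⟩)
    (Set.mem_Icc.2 ⟨zero_le_one, le_refl 1⟩) zero_le_one
  have hψ0 : ψ 0 = h x := by simp [ψ]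
  have hy1 : x + (1:ℝ) • (y - x) = y := by rw [one_smul]; abel
  have hψ1 : ψ 1 = h y - ⟪G x, y - x⟫ - L * ‖y - x‖ ^ 2 / 2 := by
    simp [ψ, hy1]
  rw [hψ0, hψ1] at hfin
  linarith

lemma aux_three_point {r : E → ℝ} (hr : ConvexOn ℝ Set.univ r) {η : ℝ} (hη : 0 < η)
    (b wt w₁ : E)
    (hmin : ∀ v, ⟪b, w₁⟫ + 1/(2*η)*‖w₁ - wt‖^2 + r w₁ ≤ ⟪b, v⟫ + 1/(2*η)*‖v - wt‖^2 + r v)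
    (w : E) :
    ⟪b, w₁ - w⟫ + r w₁ - r w ≤ 1/(2*η)*(‖w - wt‖^2 - ‖w - w₁‖^2 - ‖w₁ - wt‖^2) := by
  set s : ℝ := 1/(2*η) with hsdef
  have hs : 0 < s := by positivity
  have hexp : ∀ lam : ℝ, ‖w₁ + lam • (w - w₁) - wt‖ ^ 2
      = ‖w₁ - wt‖^2 + 2*lam*⟪w₁ - wt, w - w₁⟫ + lam^2*‖w - w₁‖^2 := by
    intro lam
    have heq : w₁ + lam • (w - w₁) - wt = (w₁ - wt) + lam • (w - w₁) := by abel
    rw [heq, norm_add_sq_real, real_inner_smul_right, norm_smul, Real.norm_eq_abs,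
      mul_pow, sq_abs]
    ring
  set C : ℝ := ⟪b, w - w₁⟫ + s*(2*⟪w₁ - wt, w - w₁⟫) + r w - r w₁ with hC
  have hCnn : 0 ≤ C := by
    by_contra hneg
    push_neg at hneg
    set D : ℝ := s*‖w - w₁‖^2 + 1 with hD
    have hD1 : 1 ≤ D := by
      have h0 : 0 ≤ s*‖w - w₁‖^2 := by positivity
      simp only [hD]; linarith
    have hDpos : 0 < D := by linarith
    set lam : ℝ := min 1 (-C / (2*D)) with hlam
    have hlampos : 0 < lam :=
      lt_min one_pos (div_pos (neg_pos.2 hneg) (by linarith))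
    have hlam1 : lam ≤ 1 := min_le_left _ _
    have hkey := hmin (w₁ + lam • (w - w₁))
    rw [hexp lam, inner_add_right, real_inner_smul_right, mul_add, mul_add] at hkey
    have hrconv : r (w₁ + lam • (w - w₁)) ≤ (1 - lam) * r w₁ + lam * r w := by
      have hcomb : w₁ + lam • (w - w₁) = (1 - lam) • w₁ + lam • w := by
        rw [smul_sub, sub_smul, one_smul]; abel
      rw [hcomb]
      exact hr.2 (Set.mem_univ w₁) (Set.mem_univ w) (by linarith) hlampos.le (by ring)
    have hval : 0 ≤ lam * (C + lam * (s*‖w - w₁‖^2)) := by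
      have hexpand : lam * (C + lam * (s*‖w - w₁‖^2))
          = lam*⟪b, w - w₁⟫ + s*(2*lam*⟪w₁ - wt, w - w₁⟫) + s*(lam^2*‖w - w₁‖^2)
            + lam*(r w - r w₁) := by
        rw [hC]; ring
      rw [hexpand]
      linarith [hkey, hrconv]
    have hX : 0 ≤ C + lam * (s*‖w - w₁‖^2) := by
      by_contra hX'
      push_neg at hX'
      nlinarith [mul_pos hlampos (neg_pos.2 hX')]
    have hlamD : lam * (s*‖w - w₁‖^2) ≤ -C/2 := by
      have h1 : lam ≤ -C/(2*D) := min_le_right _ _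
      have h2 : s*‖w - w₁‖^2 ≤ D := by simp only [hD]; linarith
      calc lam * (s*‖w - w₁‖^2) ≤ lam * D := mul_le_mul_of_nonneg_left h2 hlampos.le
        _ ≤ (-C/(2*D)) * D := mul_le_mul_of_nonneg_right h1 hDpos.le
        _ = -C/2 := by field_simp
    linarith
  have hid : 2*⟪w₁ - wt, w - w₁⟫ = ‖w - wt‖^2 - ‖w₁ - wt‖^2 - ‖w - w₁‖^2 := by
    have h1 : w - wt = (w₁ - wt) + (w - w₁) := by abel
    rw [h1, norm_add_sq_real]; ring
  have hids : s*(2*⟪w₁ - wt, w - w₁⟫) = s*(‖w - wt‖^2 - ‖w₁ - wt‖^2 - ‖w - w₁‖^2) := by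
    rw [hid]
  have hinner : ⟪b, w₁ - w⟫ = -⟪b, w - w₁⟫ := by
    rw [← inner_neg_right]; congr 1; abel
  rw [hinner]
  have hgoal : -⟪b, w - w₁⟫ + r w₁ - r w ≤ s*(‖w - wt‖^2 - ‖w - w₁‖^2 - ‖w₁ - wt‖^2) := by
    have hexpand2 : s*(‖w - wt‖^2 - ‖w - w₁‖^2 - ‖w₁ - wt‖^2)
        = s*(‖w - wt‖^2 - ‖w₁ - wt‖^2 - ‖w - w₁‖^2) := by ring
    rw [hexpand2, ← hids]
    rw [hC] at hCnn
    linarith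
  exact hgoal

end aux

section aux2

lemma aux_young (a b c : ℝ) (hc : 0 < c) : a*b ≤ c*a^2 + b^2/(4*c) := by
  rw [← sub_nonneg]
  have key : (c*a^2 + b^2/(4*c) - a*b) = (2*c*a - b)^2 / (4*c) := by
    field_simp; ring
  rw [key]; positivity

lemma aux_chain {E F : Type*} [NormedAddCommGroup E] [InnerProductSpace ℝ E] [CompleteSpace E]
    [NormedAddCommGroup F] [InnerProductSpace ℝ F] [CompleteSpace F]
    {f : F → ℝ} {gradf : F → F} {g : E → F} {Dg : E → (E →L[ℝ] F)}
    (hgradf : ∀ u, HasGradientAt f (gradf u) u) (hDg : ∀ w, HasFDerivAt g (Dg w) w) (w : E) :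
    HasGradientAt (fun w => f (g w)) ((ContinuousLinearMap.adjoint (Dg w)) (gradf (g w))) w := by
  have h1 := (hgradf (g w)).hasFDerivAt.comp w (hDg w)
  rw [hasGradientAt_iff_hasFDerivAt]
  refine h1.congr_fderiv ?_
  ext v
  simp [InnerProductSpace.toDual_apply_apply, ContinuousLinearMap.adjoint_inner_left]

end aux2
set_option maxHeartbeats 2000000

/-- Expected one-step bound for the biased compositional proximal gradient step.
With `F = f∘g + r`, `f∘g` convex and `L`-smooth, `η ≤ 1/(2L)`, and
`w₁ = argmin_w ⟨ẑᵀ∇f(ŷ), w⟩ + (1/(2η))‖w − wₜ‖² + r(w)` where `ŷ, ẑ` are independent unbiased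
estimators of `g(wₜ)` and `∇g(wₜ)` with `E‖ŷ − g(wₜ)‖² ≤ σ₀²/m`, `E‖ẑ − ∇g(wₜ)‖² ≤ σ₁²/m`,
`E‖ẑ‖² ≤ C_g²`, `‖∇f‖ ≤ C_f` and `∇f` `L_f`-Lipschitz, then for any fixed `w`:
`E[F(w₁) − F(w)] ≤ (1/(2η))(E‖w − wₜ‖² − E‖w − w₁‖²) + (μ/4)E‖w − wₜ‖²
  + 2η C_f² σ₁²/m + 2η C_g² L_f² σ₀²/m + C_g² L_f² σ₀²/(μ m)`. -/
theorem expected_one_step_compositional_prox {d p : ℕ}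
    {Ω : Type*} [MeasureSpace Ω] [IsProbabilityMeasure (ℙ : Measure Ω)]
    [MeasurableSpace (EuclideanSpace ℝ (Fin d) →L[ℝ] EuclideanSpace ℝ (Fin p))]
    [BorelSpace (EuclideanSpace ℝ (Fin d) →L[ℝ] EuclideanSpace ℝ (Fin p))]
    (f : EuclideanSpace ℝ (Fin p) → ℝ)
    (gradf : EuclideanSpace ℝ (Fin p) → EuclideanSpace ℝ (Fin p))
    (g : EuclideanSpace ℝ (Fin d) → EuclideanSpace ℝ (Fin p))
    (Dg : EuclideanSpace ℝ (Fin d) → (EuclideanSpace ℝ (Fin d) →L[ℝ] EuclideanSpace ℝ (Fin p)))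
    (r : EuclideanSpace ℝ (Fin d) → ℝ)
    (Cf Lf Cg L η μ σ₀ σ₁ : ℝ) (m : ℕ) (hm : 0 < m)
    (hL : 0 < L) (hη : 0 < η) (hηL : η ≤ 1 / (2 * L)) (hμ : 0 < μ)
    (hgradf : ∀ u, HasGradientAt f (gradf u) u)
    (hCf : ∀ u, ‖gradf u‖ ≤ Cf)
    (hLf : ∀ u u', ‖gradf u - gradf u'‖ ≤ Lf * ‖u - u'‖)
    (hDg : ∀ w, HasFDerivAt g (Dg w) w)
    (hconv : ConvexOn ℝ Set.univ (fun w => f (g w)))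
    (hrconv : ConvexOn ℝ Set.univ r)
    (hsmooth : ∀ w w', ‖(ContinuousLinearMap.adjoint (Dg w)) (gradf (g w))
        - (ContinuousLinearMap.adjoint (Dg w')) (gradf (g w'))‖ ≤ L * ‖w - w'‖)
    (wt : EuclideanSpace ℝ (Fin d))
    (yhat : Ω → EuclideanSpace ℝ (Fin p))
    (zhat : Ω → (EuclideanSpace ℝ (Fin d) →L[ℝ] EuclideanSpace ℝ (Fin p)))
    (w₁ : Ω → EuclideanSpace ℝ (Fin d))
    (hmeas_y : Measurable yhat) (hmeas_z : Measurable zhat)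
    (hindep : IndepFun yhat zhat ℙ)
    (hint_y : Integrable yhat ℙ) (hint_z : Integrable zhat ℙ)
    (hunbiased_y : ∫ ω, yhat ω ∂ℙ = g wt)
    (hunbiased_z : ∫ ω, zhat ω ∂ℙ = Dg wt)
    (hmom_y : ∫ ω, ‖yhat ω - g wt‖ ^ 2 ∂ℙ ≤ σ₀ ^ 2 / m)
    (hmom_z : ∫ ω, ‖zhat ω - Dg wt‖ ^ 2 ∂ℙ ≤ σ₁ ^ 2 / m)
    (hmom_z2 : ∫ ω, ‖zhat ω‖ ^ 2 ∂ℙ ≤ Cg ^ 2)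
    (hint_y2 : Integrable (fun ω => ‖yhat ω - g wt‖ ^ 2) ℙ)
    (hint_z2 : Integrable (fun ω => ‖zhat ω - Dg wt‖ ^ 2) ℙ)
    (hmin : ∀ ω (v : EuclideanSpace ℝ (Fin d)),
      ⟪(ContinuousLinearMap.adjoint (zhat ω)) (gradf (yhat ω)), w₁ ω⟫
          + 1 / (2 * η) * ‖w₁ ω - wt‖ ^ 2 + r (w₁ ω)
        ≤ ⟪(ContinuousLinearMap.adjoint (zhat ω)) (gradf (yhat ω)), v⟫
          + 1 / (2 * η) * ‖v - wt‖ ^ 2 + r v)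
    (hint_F : ∀ v : EuclideanSpace ℝ (Fin d),
      Integrable (fun ω => f (g (w₁ ω)) + r (w₁ ω) - (f (g v) + r v)) ℙ)
    (hint_dist : ∀ v : EuclideanSpace ℝ (Fin d),
      Integrable (fun ω => ‖v - w₁ ω‖ ^ 2) ℙ) :
    ∀ w : EuclideanSpace ℝ (Fin d),
      (∫ ω, (f (g (w₁ ω)) + r (w₁ ω) - (f (g w) + r w)) ∂ℙ)
        ≤ 1 / (2 * η) * (‖w - wt‖ ^ 2 - ∫ ω, ‖w - w₁ ω‖ ^ 2 ∂ℙ)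
          + μ / 4 * ‖w - wt‖ ^ 2
          + 2 * η * Cf ^ 2 * σ₁ ^ 2 / m
          + 2 * η * Cg ^ 2 * Lf ^ 2 * σ₀ ^ 2 / m
          + Cg ^ 2 * Lf ^ 2 * σ₀ ^ 2 / (μ * m) := by
  intro w
  have hGh : ∀ v, HasGradientAt (fun x => f (g x))
      ((ContinuousLinearMap.adjoint (Dg v)) (gradf (g v))) v :=
    fun v => aux_chain hgradf hDg v
  set u₀ : EuclideanSpace ℝ (Fin p) := gradf (g wt) with hu₀
  set cvec : EuclideanSpace ℝ (Fin d) := wt - w with hcvec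
  set G0 : EuclideanSpace ℝ (Fin d) := (ContinuousLinearMap.adjoint (Dg wt)) u₀ with hG0
  -- the linear functional A ↦ ⟪u₀, A cvec⟫
  set Lmap : (EuclideanSpace ℝ (Fin d) →L[ℝ] EuclideanSpace ℝ (Fin p)) →L[ℝ] ℝ :=
    (innerSL ℝ u₀).comp (ContinuousLinearMap.apply ℝ (EuclideanSpace ℝ (Fin p)) cvec) with hLmap
  have hLmap_apply : ∀ A : EuclideanSpace ℝ (Fin d) →L[ℝ] EuclideanSpace ℝ (Fin p),
      Lmap A = ⟪u₀, A cvec⟫ := fun A => rfl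
  -- constants
  set C2 : ℝ := (2*η + 1/μ) * Lf^2 with hC2
  set C3 : ℝ := 2*η*Cf^2 with hC3
  set Kc : ℝ := 1/(2*η)*‖w - wt‖^2 + μ/4*‖w - wt‖^2 + Lmap (Dg wt) with hKc
  set Φ : Ω → ℝ := fun ω =>
    Kc + (-(1/(2*η)))*‖w - w₁ ω‖^2 + C2*(‖zhat ω‖^2 * ‖yhat ω - g wt‖^2)
      + C3*‖zhat ω - Dg wt‖^2 + (-(Lmap (zhat ω))) with hΦ
  -- pointwise bound
  have claim1 : ∀ ω, f (g (w₁ ω)) + r (w₁ ω) - (f (g w) + r w) ≤ Φ ω := by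
    intro ω
    set z := zhat ω with hz
    set yv := yhat ω with hyv
    set u := w₁ ω with hu
    set bv : EuclideanSpace ℝ (Fin d) := (ContinuousLinearMap.adjoint z) (gradf yv) with hbv
    set Δ₁ : EuclideanSpace ℝ (Fin d) :=
      (ContinuousLinearMap.adjoint z) u₀ - bv with hΔ₁
    set Δ₂ : EuclideanSpace ℝ (Fin d) := G0 - (ContinuousLinearMap.adjoint z) u₀ with hΔ₂
    set Δ : EuclideanSpace ℝ (Fin d) := G0 - bv with hΔ
    have hΔsplit : Δ = Δ₁ + Δ₂ := by rw [hΔ, hΔ₁, hΔ₂]; abel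
    -- three point
    have h3pt := aux_three_point hrconv hη bv wt u (hmin ω) w
    -- descent and convexity
    have hdesc := aux_descent hGh hsmooth wt u
    have hconvx := aux_gradient_convex hconv hGh wt w
    -- inner product decompositions
    have hip1 : ⟪G0, u - wt⟫ - ⟪G0, w - wt⟫ = ⟪G0, u - w⟫ := by
      rw [← inner_sub_right]; congr 1; abel
    have hip2 : ⟪G0, u - w⟫ - ⟪bv, u - w⟫ = ⟪Δ, u - wt⟫ + (⟪Δ₁, cvec⟫ + ⟪Δ₂, cvec⟫) := by
      rw [← inner_sub_left, ← inner_add_left, ← hΔsplit, ← inner_add_right, hcvec]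
      congr 1; abel
    -- Young inequalities
    have hy1 : ⟪Δ, u - wt⟫ ≤ η*‖Δ‖^2 + 1/(4*η)*‖u - wt‖^2 := by
      have h1 := real_inner_le_norm Δ (u - wt)
      have h2 := aux_young ‖Δ‖ ‖u - wt‖ η hη
      have h3 : ‖u - wt‖^2/(4*η) = 1/(4*η)*‖u - wt‖^2 := by ring
      linarith only [h1, h2, h3.le, h3.ge]
    have hy2 : ⟪Δ₁, cvec⟫ ≤ 1/μ*‖Δ₁‖^2 + μ/4*‖w - wt‖^2 := by
      have h1 := real_inner_le_norm Δ₁ cvec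
      have h2 := aux_young ‖Δ₁‖ ‖cvec‖ (1/μ) (by positivity)
      have h3 : ‖cvec‖^2/(4*(1/μ)) = μ/4*‖cvec‖^2 := by field_simp
      have h4 : ‖cvec‖ = ‖w - wt‖ := by rw [hcvec, norm_sub_rev]
      rw [h4] at h1 h2 h3
      linarith only [h1, h2, h3.le, h3.ge]
    have hy3 : ⟪Δ₂, cvec⟫ = Lmap (Dg wt) - Lmap z := by
      rw [hΔ₂, inner_sub_left, hG0, ContinuousLinearMap.adjoint_inner_left,
        ContinuousLinearMap.adjoint_inner_left, hLmap_apply, hLmap_apply]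
    -- norm bounds
    have hnΔ : ‖Δ‖^2 ≤ 2*‖Δ₁‖^2 + 2*‖Δ₂‖^2 := by
      have h1 : ‖Δ‖ ≤ ‖Δ₁‖ + ‖Δ₂‖ := by rw [hΔsplit]; exact norm_add_le _ _
      nlinarith only [h1, norm_nonneg Δ, norm_nonneg Δ₁, norm_nonneg Δ₂,
        sq_nonneg (‖Δ₁‖ - ‖Δ₂‖)]
    have hnΔ₁ : ‖Δ₁‖^2 ≤ Lf^2*(‖z‖^2 * ‖yv - g wt‖^2) := by
      have h1 : Δ₁ = (ContinuousLinearMap.adjoint z) (u₀ - gradf yv) := by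
        rw [hΔ₁, map_sub, hbv]
      have h2 : ‖Δ₁‖ ≤ ‖z‖ * (Lf * ‖g wt - yv‖) := by
        rw [h1]
        calc ‖(ContinuousLinearMap.adjoint z) (u₀ - gradf yv)‖
            ≤ ‖ContinuousLinearMap.adjoint z‖ * ‖u₀ - gradf yv‖ :=
              ContinuousLinearMap.le_opNorm _ _
          _ = ‖z‖ * ‖u₀ - gradf yv‖ := by
              rw [LinearIsometryEquiv.norm_map (ContinuousLinearMap.adjoint) z]
          _ ≤ ‖z‖ * (Lf * ‖g wt - yv‖) :=
              mul_le_mul_of_nonneg_left (hLf _ _) (norm_nonneg z)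
      have h3 : ‖g wt - yv‖ = ‖yv - g wt‖ := norm_sub_rev _ _
      have h4 := pow_le_pow_left₀ (norm_nonneg Δ₁) h2 2
      rw [h3] at h4
      calc ‖Δ₁‖^2 ≤ (‖z‖ * (Lf * ‖yv - g wt‖))^2 := h4
        _ = Lf^2*(‖z‖^2 * ‖yv - g wt‖^2) := by ring
    have hnΔ₂ : ‖Δ₂‖^2 ≤ Cf^2*‖z - Dg wt‖^2 := by
      have h1 : Δ₂ = (ContinuousLinearMap.adjoint (Dg wt - z)) u₀ := by
        rw [hΔ₂, map_sub, hG0]; rfl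
      have h2 : ‖Δ₂‖ ≤ ‖z - Dg wt‖ * Cf := by
        rw [h1]
        calc ‖(ContinuousLinearMap.adjoint (Dg wt - z)) u₀‖
            ≤ ‖ContinuousLinearMap.adjoint (Dg wt - z)‖ * ‖u₀‖ :=
              ContinuousLinearMap.le_opNorm _ _
          _ = ‖Dg wt - z‖ * ‖u₀‖ := by
              rw [LinearIsometryEquiv.norm_map (ContinuousLinearMap.adjoint) (Dg wt - z)]
          _ ≤ ‖Dg wt - z‖ * Cf :=
              mul_le_mul_of_nonneg_left (hCf _) (norm_nonneg _)
          _ = ‖z - Dg wt‖ * Cf := by rw [norm_sub_rev]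
      have h4 := pow_le_pow_left₀ (norm_nonneg Δ₂) h2 2
      calc ‖Δ₂‖^2 ≤ (‖z - Dg wt‖ * Cf)^2 := h4
        _ = Cf^2*‖z - Dg wt‖^2 := by ring
    -- step size
    have hstep : L/2*‖u - wt‖^2 + 1/(4*η)*‖u - wt‖^2 ≤ 1/(2*η)*‖u - wt‖^2 := by
      have hL2 : L ≤ 1/(2*η) := by
        rw [le_div_iff₀ (by positivity)]
        have h5 := (le_div_iff₀ (by positivity : (0:ℝ) < 2*L)).mp hηL
        linarith only [h5]
      have h4 : (1:ℝ)/(4*η) = 1/(2*η)/2 := by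
        rw [div_div]; congr 1; ring
      rw [h4]
      have hprod := mul_nonneg (sub_nonneg.2 hL2) (sq_nonneg ‖u - wt‖)
      linarith only [hprod]
    -- multiply out
    have hmul1 : η*‖Δ‖^2 ≤ 2*η*‖Δ₁‖^2 + 2*η*‖Δ₂‖^2 := by
      have := mul_le_mul_of_nonneg_left hnΔ hη.le
      linarith only [this]
    have hmul2 : (2*η)*‖Δ₁‖^2 ≤ (2*η)*(Lf^2*(‖z‖^2 * ‖yv - g wt‖^2)) :=
      mul_le_mul_of_nonneg_left hnΔ₁ (by positivity)
    have hmul3 : (1/μ)*‖Δ₁‖^2 ≤ (1/μ)*(Lf^2*(‖z‖^2 * ‖yv - g wt‖^2)) :=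
      mul_le_mul_of_nonneg_left hnΔ₁ (by positivity)
    have hmul4 : (2*η)*‖Δ₂‖^2 ≤ (2*η)*(Cf^2*‖z - Dg wt‖^2) :=
      mul_le_mul_of_nonneg_left hnΔ₂ (by positivity)
    -- assemble
    rw [hΦ]
    simp only
    rw [hKc, hC2, hC3]
    linarith only [h3pt, hdesc, hconvx, hip1, hip2, hy1, hy2, hy3.le, hy3.ge, hstep,
      hmul1, hmul2, hmul3, hmul4]
  -- measurability
  have hmz : Measurable fun ω => ‖zhat ω‖^2 := (hmeas_z.norm.pow_const 2)
  have hmy : Measurable fun ω => ‖yhat ω - g wt‖^2 :=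
    ((hmeas_y.sub measurable_const).norm.pow_const 2)
  have int_znorm2 : Integrable (fun ω => ‖zhat ω‖^2) ℙ := by
    have idom : Integrable (fun ω => 2*‖zhat ω - Dg wt‖^2 + 2*‖Dg wt‖^2) ℙ :=
      (hint_z2.const_mul 2).add (integrable_const _)
    apply Integrable.mono' idom hmz.aestronglyMeasurable
    filter_upwards with ω
    have h1 := norm_add_le (zhat ω - Dg wt) (Dg wt)
    rw [sub_add_cancel] at h1
    rw [Real.norm_eq_abs, abs_of_nonneg (by positivity)]
    nlinarith only [h1, norm_nonneg (zhat ω - Dg wt), norm_nonneg (Dg wt),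
      norm_nonneg (zhat ω), sq_nonneg (‖zhat ω - Dg wt‖ - ‖Dg wt‖)]
  have hindAB : IndepFun (fun ω => ‖zhat ω‖^2) (fun ω => ‖yhat ω - g wt‖^2) ℙ := by
    have hmz' : Measurable
        fun A : EuclideanSpace ℝ (Fin d) →L[ℝ] EuclideanSpace ℝ (Fin p) => ‖A‖^2 :=
      (continuous_norm.pow 2).measurable
    have hmy' : Measurable fun v : EuclideanSpace ℝ (Fin p) => ‖v - g wt‖^2 :=
      ((continuous_id.sub continuous_const).norm.pow 2).measurable
    exact hindep.symm.comp hmz' hmy'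
  have int_A : Integrable (fun ω => ‖zhat ω‖^2 * ‖yhat ω - g wt‖^2) ℙ :=
    hindAB.integrable_mul int_znorm2 hint_y2
  have hIA : ∫ ω, ‖zhat ω‖^2 * ‖yhat ω - g wt‖^2 ∂ℙ
      = (∫ ω, ‖zhat ω‖^2 ∂ℙ) * (∫ ω, ‖yhat ω - g wt‖^2 ∂ℙ) :=
    hindAB.integral_fun_mul_eq_mul_integral hmz.aestronglyMeasurable hmy.aestronglyMeasurable
  have int_L : Integrable (fun ω => Lmap (zhat ω)) ℙ := Lmap.integrable_comp hint_z
  have hIL : ∫ ω, Lmap (zhat ω) ∂ℙ = Lmap (Dg wt) := by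
    rw [Lmap.integral_comp_comm hint_z, hunbiased_z]
  have i0 : Integrable (fun _ : Ω => Kc) ℙ := integrable_const _
  have i1 : Integrable (fun ω => (-(1/(2*η)))*‖w - w₁ ω‖^2) ℙ := (hint_dist w).const_mul _
  have i2 : Integrable (fun ω => C2*(‖zhat ω‖^2 * ‖yhat ω - g wt‖^2)) ℙ := int_A.const_mul _
  have i3 : Integrable (fun ω => C3*‖zhat ω - Dg wt‖^2) ℙ := hint_z2.const_mul _
  have i4 : Integrable (fun ω => -(Lmap (zhat ω))) ℙ := int_L.neg
  have i01 : Integrable (fun ω => Kc + (-(1/(2*η)))*‖w - w₁ ω‖^2) ℙ := i0.add i1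
  have i012 : Integrable (fun ω => Kc + (-(1/(2*η)))*‖w - w₁ ω‖^2
      + C2*(‖zhat ω‖^2 * ‖yhat ω - g wt‖^2)) ℙ := i01.add i2
  have i0123 : Integrable (fun ω => Kc + (-(1/(2*η)))*‖w - w₁ ω‖^2
      + C2*(‖zhat ω‖^2 * ‖yhat ω - g wt‖^2) + C3*‖zhat ω - Dg wt‖^2) ℙ := i012.add i3
  have hΦint : Integrable Φ ℙ := by
    rw [hΦ]; exact i0123.add i4
  have hmono := integral_mono (hint_F w) hΦint claim1
  have hIΦ : ∫ ω, Φ ω ∂ℙ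
      = Kc + (-(1/(2*η)))*(∫ ω, ‖w - w₁ ω‖^2 ∂ℙ)
        + C2*((∫ ω, ‖zhat ω‖^2 ∂ℙ) * (∫ ω, ‖yhat ω - g wt‖^2 ∂ℙ))
        + C3*(∫ ω, ‖zhat ω - Dg wt‖^2 ∂ℙ) + (-(Lmap (Dg wt))) := by
    rw [hΦ]
    rw [integral_add i0123 i4, integral_add i012 i3, integral_add i01 i2,
        integral_add i0 i1]
    rw [integral_const]
    simp only [probReal_univ, ENNReal.toReal_one, one_smul]
    rw [integral_const_mul _ _, integral_const_mul _ _, integral_const_mul _ _, integral_neg, hIA, hIL]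
  have hIy_nn : 0 ≤ ∫ ω, ‖yhat ω - g wt‖^2 ∂ℙ := integral_nonneg (fun ω => by positivity)
  have hIz_nn : 0 ≤ ∫ ω, ‖zhat ω‖^2 ∂ℙ := integral_nonneg (fun ω => by positivity)
  have hAB : (∫ ω, ‖zhat ω‖^2 ∂ℙ) * (∫ ω, ‖yhat ω - g wt‖^2 ∂ℙ) ≤ Cg^2 * (σ₀^2/m) :=
    mul_le_mul hmom_z2 hmom_y hIy_nn (sq_nonneg Cg)
  have hC2nn : 0 ≤ C2 := by rw [hC2]; positivity
  have hC3nn : 0 ≤ C3 := by rw [hC3]; positivity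
  have hb1 : C2*((∫ ω, ‖zhat ω‖^2 ∂ℙ) * (∫ ω, ‖yhat ω - g wt‖^2 ∂ℙ))
      ≤ C2*(Cg^2*(σ₀^2/m)) := mul_le_mul_of_nonneg_left hAB hC2nn
  have hb2 : C3*(∫ ω, ‖zhat ω - Dg wt‖^2 ∂ℙ) ≤ C3*(σ₁^2/m) :=
    mul_le_mul_of_nonneg_left hmom_z hC3nn
  rw [hIΦ] at hmono
  have hmne : (m:ℝ) ≠ 0 := Nat.cast_ne_zero.2 hm.ne'
  have hring : C2*(Cg^2*(σ₀^2/m)) = 2*η*Cg^2*Lf^2*σ₀^2/m + Cg^2*Lf^2*σ₀^2/(μ*m) := by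
    rw [hC2]; field_simp
  have hring2 : C3*(σ₁^2/m) = 2*η*Cf^2*σ₁^2/m := by rw [hC3]; ring
  linarith only [hmono, hb1, hb2, hring, hring2, hKc]
end
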